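/- Let (L, ∘_λ, ∗_λ) be a pre-Lie Poisson conformal superalgebra. Define [a_λ b] := a ∗_λ b − (−1)^{|a||b|} (b ∗_{−∂−λ} a) for homogeneous a, b ∈ L. Then (L, ∘_λ, [·_λ ·]) is a transposed Poisson conformal superalgebra. -/

import Mathlib

open Polynomial
open scoped TensorProduct

noncomputable section

namespace TPCSAFormal

/-- The super-sign `(-1)^{i·j}` for parities `i, j ∈ ℤ/2ℤ`. -/
def sgn (i j : ZMod 2) : ℂ := (-1 : ℂ) ^ (i.val * j.val)

variable (L : Type*) [AddCommGroup L] [Module ℂ L]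
  [Module (Polynomial ℂ) L] [IsScalarTower ℂ (Polynomial ℂ) L]

/-- A conformal `λ`-product on the `ℂ[∂]`-module `L`, recorded by its family of `n`-th
product coefficients: `a ∘_λ b = ∑_n λ^n • coeff n a b`, with finitely many nonzero terms.
This is exactly the data of a `ℂ`-bilinear map `L ⊗ L → ℂ[λ] ⊗ L`. -/
structure ConformalProduct where
  coeff : ℕ → L →ₗ[ℂ] L →ₗ[ℂ] L
  coeff_finite : ∀ a b : L, ∃ N : ℕ, ∀ n : ℕ, N ≤ n → coeff n a b = 0

variable {L}

/-- The value `a ∘_λ b` of the `λ`-product at `λ ∈ ℂ`.  Since `ℂ` is infinite, identities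
between such values for all `λ` are equivalent to the corresponding polynomial identities. -/
def ConformalProduct.mul (m : ConformalProduct L) (lam : ℂ) (a b : L) : L :=
  ∑ᶠ n : ℕ, lam ^ n • m.coeff n a b

/-- The value `a ∘_{-∂-λ} b`, where `∂` acts on `L` as scalar multiplication by
`X ∈ ℂ[∂]` (the variable `λ` being replaced by the operator `-∂-λ`). -/
def ConformalProduct.cmul (m : ConformalProduct L) (lam : ℂ) (a b : L) : L :=
  ∑ᶠ n : ℕ, ((-((X : Polynomial ℂ) + C lam)) ^ n) • m.coeff n a b

variable (L) in
/-- A `ℤ₂`-grading on `L` making it a `ℤ₂`-graded `ℂ[∂]`-module: `L = L₀ ⊕ L₁` with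
`∂ L_i ⊆ L_i`, where `∂` acts as multiplication by `X ∈ ℂ[∂]`. -/
structure SuperModule where
  grade : ZMod 2 → Submodule ℂ L
  isInternal : DirectSum.IsInternal grade
  X_smul_mem : ∀ (i : ZMod 2) (a : L), a ∈ grade i → (X : Polynomial ℂ) • a ∈ grade i

/-- `m` is an even `λ`-product on the `ℤ₂`-graded `ℂ[∂]`-module `(L, S)`:
it is even with respect to the grading and conformally sesquilinear. -/
structure IsLambdaProduct (S : SuperModule L) (m : ConformalProduct L) : Prop where
  even : ∀ (i j : ZMod 2) (a b : L), a ∈ S.grade i → b ∈ S.grade j →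
    ∀ n : ℕ, m.coeff n a b ∈ S.grade (i + j)
  sesq_left : ∀ (lam : ℂ) (a b : L),
    m.mul lam ((X : Polynomial ℂ) • a) b = (-lam) • m.mul lam a b
  sesq_right : ∀ (lam : ℂ) (a b : L),
    m.mul lam a ((X : Polynomial ℂ) • b) =
      (X : Polynomial ℂ) • m.mul lam a b + lam • m.mul lam a b

/-- `(L, S, m)` is a commutative associative conformal superalgebra. -/
structure IsCommAssoc (S : SuperModule L) (m : ConformalProduct L)
    extends IsLambdaProduct S m : Prop where
  comm : ∀ (i j : ZMod 2) (a b : L), a ∈ S.grade i → b ∈ S.grade j →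
    ∀ lam : ℂ, m.mul lam a b = sgn i j • m.cmul lam b a
  assoc : ∀ (lam mu : ℂ) (a b c : L),
    m.mul lam a (m.mul mu b c) = m.mul (lam + mu) (m.mul lam a b) c

/-- `(L, S, br)` is a Lie conformal superalgebra. -/
structure IsLie (S : SuperModule L) (br : ConformalProduct L)
    extends IsLambdaProduct S br : Prop where
  skew : ∀ (i j : ZMod 2) (a b : L), a ∈ S.grade i → b ∈ S.grade j →
    ∀ lam : ℂ, br.mul lam a b = -(sgn i j • br.cmul lam b a)
  jacobi : ∀ (i j : ZMod 2) (a b : L), a ∈ S.grade i → b ∈ S.grade j →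
    ∀ (c : L) (lam mu : ℂ),
      br.mul lam a (br.mul mu b c) =
        br.mul (lam + mu) (br.mul lam a b) c + sgn i j • br.mul mu b (br.mul lam a c)

/-- `(L, S, m, br)` is a transposed Poisson conformal superalgebra. -/
structure IsTPCSA (S : SuperModule L) (m br : ConformalProduct L) : Prop where
  commAssoc : IsCommAssoc S m
  lie : IsLie S br
  transposedLeibniz : ∀ (i j : ZMod 2) (a b : L), a ∈ S.grade i → b ∈ S.grade j →
    ∀ (c : L) (lam mu : ℂ),
      (2 : ℂ) • m.mul lam a (br.mul mu b c) =
        br.mul (lam + mu) (m.mul lam a b) c + sgn i j • br.mul mu b (m.mul lam a c)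

/-- `(L, S, m, br)` is a Poisson conformal superalgebra. -/
structure IsPCSA (S : SuperModule L) (m br : ConformalProduct L) : Prop where
  commAssoc : IsCommAssoc S m
  lie : IsLie S br
  leibniz : ∀ (i j : ZMod 2) (a b : L), a ∈ S.grade i → b ∈ S.grade j →
    ∀ (c : L) (lam mu : ℂ),
      br.mul lam a (m.mul mu b c) =
        m.mul (lam + mu) (br.mul lam a b) c + sgn i j • m.mul mu b (br.mul lam a c)

/-- `(L, S, br, α)` is a Hom-Lie conformal superalgebra. -/
structure IsHomLie (S : SuperModule L) (br : ConformalProduct L) (α : L → L)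
    extends IsLambdaProduct S br : Prop where
  map_smul_add : ∀ (c : ℂ) (a b : L), α (c • a + b) = c • α a + α b
  map_grade : ∀ (i : ZMod 2) (a : L), a ∈ S.grade i → α a ∈ S.grade i
  commute_partial : ∀ a : L, α ((X : Polynomial ℂ) • a) = (X : Polynomial ℂ) • α a
  skew : ∀ (i j : ZMod 2) (a b : L), a ∈ S.grade i → b ∈ S.grade j →
    ∀ lam : ℂ, br.mul lam a b = -(sgn i j • br.cmul lam b a)
  homJacobi : ∀ (i j : ZMod 2) (a b : L), a ∈ S.grade i → b ∈ S.grade j →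
    ∀ (c : L) (lam mu : ℂ),
      br.mul lam (α a) (br.mul mu b c) =
        br.mul (lam + mu) (br.mul lam a b) (α c) + sgn i j • br.mul mu (α b) (br.mul lam a c)

/-- `(L, S, p)` is a left-symmetric conformal superalgebra. -/
structure IsLeftSymmetric (S : SuperModule L) (p : ConformalProduct L)
    extends IsLambdaProduct S p : Prop where
  leftSym : ∀ (i j : ZMod 2) (a b : L), a ∈ S.grade i → b ∈ S.grade j →
    ∀ (c : L) (lam mu : ℂ),
      p.mul (lam + mu) (p.mul lam a b) c - p.mul lam a (p.mul mu b c) =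
        sgn i j • (p.mul (lam + mu) (p.mul mu b a) c - p.mul mu b (p.mul lam a c))

/-- `(L, S, p)` is a (left) Novikov conformal superalgebra. -/
structure IsNovikov (S : SuperModule L) (p : ConformalProduct L)
    extends IsLeftSymmetric S p : Prop where
  novikov : ∀ (j k : ZMod 2) (b c : L), b ∈ S.grade j → c ∈ S.grade k →
    ∀ (a : L) (lam mu : ℂ),
      p.mul (lam + mu) (p.mul lam a b) c = sgn j k • p.cmul mu (p.mul lam a c) b

/-- `(L, S, mc, p)` is a Novikov-Poisson conformal superalgebra. -/
structure IsNovikovPoisson (S : SuperModule L) (mc p : ConformalProduct L) : Prop where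
  commAssoc : IsCommAssoc S mc
  novikov : IsNovikov S p
  compat₁ : ∀ (lam mu : ℂ) (a b c : L),
    p.mul (lam + mu) (mc.mul lam a b) c = mc.mul lam a (p.mul mu b c)
  compat₂ : ∀ (i j : ZMod 2) (a b : L), a ∈ S.grade i → b ∈ S.grade j →
    ∀ (c : L) (lam mu : ℂ),
      mc.mul (lam + mu) (p.mul lam a b) c - p.mul lam a (mc.mul mu b c) =
        sgn i j • (mc.mul (lam + mu) (p.mul mu b a) c - p.mul mu b (mc.mul lam a c))

/-- `(L, S, mc, p)` is a pre-Lie commutative conformal superalgebra. -/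
structure IsPreLieComm (S : SuperModule L) (mc p : ConformalProduct L) : Prop where
  commAssoc : IsCommAssoc S mc
  leftSymmetric : IsLeftSymmetric S p
  compat : ∀ (i j : ZMod 2) (a b : L), a ∈ S.grade i → b ∈ S.grade j →
    ∀ (c : L) (lam mu : ℂ),
      p.mul lam a (mc.mul mu b c) =
        mc.mul (lam + mu) (p.mul lam a b) c + sgn i j • mc.mul mu b (p.mul lam a c)

/-- `(L, S, mc, p)` is a pre-Lie Poisson conformal superalgebra. -/
structure IsPreLiePoisson (S : SuperModule L) (mc p : ConformalProduct L) : Prop where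
  commAssoc : IsCommAssoc S mc
  leftSymmetric : IsLeftSymmetric S p
  compat₁ : ∀ (lam mu : ℂ) (a b c : L),
    p.mul (lam + mu) (mc.mul lam a b) c = mc.mul lam a (p.mul mu b c)
  compat₂ : ∀ (i j : ZMod 2) (a b : L), a ∈ S.grade i → b ∈ S.grade j →
    ∀ (c : L) (lam mu : ℂ),
      mc.mul (lam + mu) (p.mul lam a b) c - p.mul lam a (mc.mul mu b c) =
        sgn i j • (mc.mul (lam + mu) (p.mul mu b a) c - p.mul mu b (mc.mul lam a c))


section Part2
set_option linter.unusedSectionVars false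
set_option maxHeartbeats 1000000

variable {L : Type*} [AddCommGroup L] [Module ℂ L]
  [Module (Polynomial ℂ) L] [IsScalarTower ℂ (Polynomial ℂ) L]

lemma C_smul (c : ℂ) (v : L) : (C c : Polynomial ℂ) • v = c • v := by
  rw [← Polynomial.algebraMap_eq, algebraMap_smul]

/-- Evaluation of a coefficient family at a polynomial. -/
def ev (f : ℕ → L) (q : Polynomial ℂ) : L := ∑ᶠ n, q ^ n • f n

lemma finsum_eq_range {f : ℕ → L} {N : ℕ} (h : ∀ n, N ≤ n → f n = 0) :
    ∑ᶠ n, f n = ∑ n ∈ Finset.range N, f n := by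
  apply finsum_eq_sum_of_support_subset
  intro x hx
  simp only [Function.mem_support] at hx
  simp only [Finset.coe_range, Set.mem_Iio]
  by_contra hc
  exact hx (h x (le_of_not_gt hc))

lemma ev_eq_range {f : ℕ → L} {N : ℕ} (h : ∀ n, N ≤ n → f n = 0) (q : Polynomial ℂ) :
    ev f q = ∑ n ∈ Finset.range N, q ^ n • f n := by
  apply finsum_eq_range
  intro n hn; rw [h n hn, smul_zero]

lemma ext_one {f : ℕ → L} {N : ℕ} (hN : ∀ n, N ≤ n → f n = 0)
    (h : ∀ θ : ℂ, ∑ᶠ n, θ ^ n • f n = 0) : ∀ n, f n = 0 := by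
  intro n₀
  by_cases hn₀ : N ≤ n₀
  · exact hN n₀ hn₀
  rw [← Module.forall_dual_apply_eq_zero_iff ℂ]
  intro φ
  set P : Polynomial ℂ := ∑ n ∈ Finset.range N, C (φ (f n)) * X ^ n with hP
  have hev : ∀ θ : ℂ, P.eval θ = 0 := by
    intro θ
    have h1 : ∑ᶠ n, θ ^ n • f n = ∑ n ∈ Finset.range N, θ ^ n • f n :=
      finsum_eq_range (fun n hn => by rw [hN n hn, smul_zero])
    have h2 := h θ
    rw [h1] at h2
    have := congrArg φ h2
    rw [map_sum, map_zero] at this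
    rw [hP, Polynomial.eval_finset_sum]
    rw [← this]
    apply Finset.sum_congr rfl
    intro n _
    rw [map_smul]
    simp only [Polynomial.eval_mul, Polynomial.eval_C, Polynomial.eval_pow, Polynomial.eval_X,
      smul_eq_mul]
    ring
  have hP0 : P = 0 := Polynomial.funext (fun x => by rw [hev x, Polynomial.eval_zero])
  have : P.coeff n₀ = φ (f n₀) := by
    rw [hP, Polynomial.finset_sum_coeff]
    simp only [Polynomial.coeff_C_mul, Polynomial.coeff_X_pow]
    rw [Finset.sum_congr rfl (fun n _ => by rw [mul_ite, mul_one, mul_zero])]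
    rw [Finset.sum_eq_single n₀ (fun b _ hb => by simp [Ne.symm hb]) (fun hb => by
      exact absurd (Finset.mem_range.mpr (lt_of_not_ge hn₀)) hb)]
    simp
  rw [← this, hP0]
  simp

lemma ext_one' {f g : ℕ → L} {N : ℕ} (hf : ∀ n, N ≤ n → f n = 0) (hg : ∀ n, N ≤ n → g n = 0)
    (h : ∀ θ : ℂ, ∑ᶠ n, θ ^ n • f n = ∑ᶠ n, θ ^ n • g n) : f = g := by
  have key : ∀ n, (f - g) n = 0 := by
    apply ext_one (N := N) (fun n hn => by simp [hf n hn, hg n hn])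
    intro θ
    have h1 : ∑ᶠ n, θ ^ n • (f - g) n = ∑ n ∈ Finset.range N, (θ ^ n • f n - θ ^ n • g n) := by
      rw [finsum_eq_range (f := fun n => θ ^ n • (f - g) n) (N := N)
        (fun n hn => by simp [hf n hn, hg n hn])]
      exact Finset.sum_congr rfl (fun n _ => by simp [smul_sub])
    rw [h1, Finset.sum_sub_distrib]
    rw [← finsum_eq_range (f := fun n => θ ^ n • f n) (fun n hn => by simp [hf n hn]),
      ← finsum_eq_range (f := fun n => θ ^ n • g n) (fun n hn => by simp [hg n hn]), h θ,
      sub_self]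
  funext n
  have := key n
  simpa [sub_eq_zero] using this

/-- `ev` at a constant polynomial is evaluation with complex scalars. -/
lemma ev_C {f : ℕ → L} (θ : ℂ) : ev f (C θ) = ∑ᶠ n, θ ^ n • f n := by
  unfold ev
  apply finsum_congr
  intro n
  rw [← Polynomial.C_pow, C_smul]

namespace ConformalProduct

variable (m : ConformalProduct L)

/-- Evaluation of the λ-product at an arbitrary polynomial "operator value". -/
def opmul (q : Polynomial ℂ) (a b : L) : L := ev (fun n => m.coeff n a b) q

lemma mul_eq_opmul (lam : ℂ) (a b : L) : m.mul lam a b = m.opmul (C lam) a b :=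
  (ev_C lam).symm

lemma cmul_eq_opmul (lam : ℂ) (a b : L) :
    m.cmul lam a b = m.opmul (-((X : Polynomial ℂ) + C lam)) a b := rfl

lemma opmul_eq_range {a b : L} {N : ℕ} (h : ∀ n, N ≤ n → m.coeff n a b = 0) (q : Polynomial ℂ) :
    m.opmul q a b = ∑ n ∈ Finset.range N, q ^ n • m.coeff n a b :=
  ev_eq_range h q

end ConformalProduct
end Part2
section Part3
set_option linter.unusedSectionVars false
set_option maxHeartbeats 1000000

variable {L : Type*} [AddCommGroup L] [Module ℂ L]
  [Module (Polynomial ℂ) L] [IsScalarTower ℂ (Polynomial ℂ) L]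

/-- shift a family up by one (used for sesquilinearity rules). -/
def pshift (f : ℕ → L) : ℕ → L := fun n => match n with
  | 0 => 0
  | k+1 => f k

@[simp] lemma pshift_zero (f : ℕ → L) : pshift f 0 = 0 := rfl
@[simp] lemma pshift_succ (f : ℕ → L) (k : ℕ) : pshift f (k+1) = f k := rfl

lemma ev_pshift {f : ℕ → L} {N : ℕ} (h : ∀ n, N ≤ n → f n = 0) (q : Polynomial ℂ) :
    ev (pshift f) q = q • ev f q := by
  have hb : ∀ n, N + 1 ≤ n → pshift f n = 0 := by
    intro n hn
    cases n with
    | zero => omega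
    | succ k => exact h k (by omega)
  rw [ev_eq_range hb q, ev_eq_range h q, Finset.sum_range_succ']
  simp only [pshift_zero, pshift_succ, pow_zero, smul_zero, add_zero]
  rw [Finset.smul_sum]
  apply Finset.sum_congr rfl
  intro k _
  rw [smul_smul, pow_succ, mul_comm]

lemma ev_neg (f : ℕ → L) (q : Polynomial ℂ) : ev (fun n => - f n) q = - ev f q := by
  unfold ev
  simp only [smul_neg]
  exact finsum_neg_distrib _

lemma ev_add {f g : ℕ → L} {N : ℕ} (hf : ∀ n, N ≤ n → f n = 0) (hg : ∀ n, N ≤ n → g n = 0)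
    (q : Polynomial ℂ) : ev (fun n => f n + g n) q = ev f q + ev g q := by
  rw [ev_eq_range hf q, ev_eq_range hg q,
    ev_eq_range (f := fun n => f n + g n) (fun n hn => by simp [hf n hn, hg n hn]) q,
    ← Finset.sum_add_distrib]
  exact Finset.sum_congr rfl (fun n _ => smul_add _ _ _)

lemma ev_psmul (p : Polynomial ℂ) {f : ℕ → L} {N : ℕ} (h : ∀ n, N ≤ n → f n = 0)
    (q : Polynomial ℂ) : ev (fun n => p • f n) q = p • ev f q := by
  rw [ev_eq_range (f := fun n => p • f n) (fun n hn => by simp [h n hn]) q,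
    ev_eq_range h q, Finset.smul_sum]
  refine Finset.sum_congr rfl (fun n _ => ?_)
  rw [smul_smul, smul_smul, mul_comm]

lemma ev_csmul (c : ℂ) (f : ℕ → L) (q : Polynomial ℂ) :
    ev (fun n => c • f n) q = c • ev f q := by
  unfold ev
  rw [smul_finsum]
  exact finsum_congr (fun n => smul_comm _ _ _)

namespace ConformalProduct

variable (m : ConformalProduct L)

lemma opmul_add_left (q : Polynomial ℂ) (a a' b : L) :
    m.opmul q (a + a') b = m.opmul q a b + m.opmul q a' b := by
  unfold opmul
  rw [show (fun n => m.coeff n (a + a') b) = fun n => m.coeff n a b + m.coeff n a' b from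
    funext fun n => by simp [map_add]]
  obtain ⟨N1, h1⟩ := m.coeff_finite a b
  obtain ⟨N2, h2⟩ := m.coeff_finite a' b
  exact ev_add (N := max N1 N2) (fun n hn => h1 n (le_trans (le_max_left _ _) hn))
    (fun n hn => h2 n (le_trans (le_max_right _ _) hn)) q

lemma opmul_add_right (q : Polynomial ℂ) (a b b' : L) :
    m.opmul q a (b + b') = m.opmul q a b + m.opmul q a b' := by
  unfold opmul
  rw [show (fun n => m.coeff n a (b + b')) = fun n => m.coeff n a b + m.coeff n a b' from
    funext fun n => by simp [map_add]]
  obtain ⟨N1, h1⟩ := m.coeff_finite a b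
  obtain ⟨N2, h2⟩ := m.coeff_finite a b'
  exact ev_add (N := max N1 N2) (fun n hn => h1 n (le_trans (le_max_left _ _) hn))
    (fun n hn => h2 n (le_trans (le_max_right _ _) hn)) q

lemma opmul_smul_left (q : Polynomial ℂ) (c : ℂ) (a b : L) :
    m.opmul q (c • a) b = c • m.opmul q a b := by
  unfold opmul
  rw [show (fun n => m.coeff n (c • a) b) = fun n => c • m.coeff n a b from
    funext fun n => by simp [map_smul]]
  exact ev_csmul c _ q

lemma opmul_smul_right (q : Polynomial ℂ) (c : ℂ) (a b : L) :
    m.opmul q a (c • b) = c • m.opmul q a b := by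
  unfold opmul
  rw [show (fun n => m.coeff n a (c • b)) = fun n => c • m.coeff n a b from
    funext fun n => by simp [map_smul]]
  exact ev_csmul c _ q

lemma opmul_neg_left (q : Polynomial ℂ) (a b : L) :
    m.opmul q (-a) b = - m.opmul q a b := by
  unfold opmul
  rw [show (fun n => m.coeff n (-a) b) = fun n => - m.coeff n a b from
    funext fun n => by simp [map_neg]]
  exact ev_neg _ q

lemma opmul_neg_right (q : Polynomial ℂ) (a b : L) :
    m.opmul q a (-b) = - m.opmul q a b := by
  unfold opmul
  rw [show (fun n => m.coeff n a (-b)) = fun n => - m.coeff n a b from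
    funext fun n => by simp [map_neg]]
  exact ev_neg _ q

lemma opmul_sub_left (q : Polynomial ℂ) (a a' b : L) :
    m.opmul q (a - a') b = m.opmul q a b - m.opmul q a' b := by
  rw [sub_eq_add_neg, m.opmul_add_left, m.opmul_neg_left, ← sub_eq_add_neg]

lemma opmul_sub_right (q : Polynomial ℂ) (a b b' : L) :
    m.opmul q a (b - b') = m.opmul q a b - m.opmul q a b' := by
  rw [sub_eq_add_neg, m.opmul_add_right, m.opmul_neg_right, ← sub_eq_add_neg]

lemma opmul_zero_left (q : Polynomial ℂ) (b : L) : m.opmul q 0 b = 0 := by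
  unfold opmul
  rw [show (fun n => m.coeff n 0 b) = fun _ => (0 : L) from funext fun n => by simp]
  unfold ev
  simp

lemma opmul_zero_right (q : Polynomial ℂ) (a : L) : m.opmul q a 0 = 0 := by
  unfold opmul
  rw [show (fun n => m.coeff n a 0) = fun _ => (0 : L) from funext fun n => by simp]
  unfold ev
  simp

/-- Coefficient form of left sesquilinearity. -/
lemma coeff_X_left
    (hsl : ∀ (lam : ℂ) (a b : L), m.mul lam ((X : Polynomial ℂ) • a) b = (-lam) • m.mul lam a b)
    (a b : L) :
    (fun n => m.coeff n ((X : Polynomial ℂ) • a) b) = pshift (fun k => - m.coeff k a b) := by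
  obtain ⟨N1, h1⟩ := m.coeff_finite a b
  obtain ⟨N2, h2⟩ := m.coeff_finite ((X : Polynomial ℂ) • a) b
  apply ext_one' (N := max N2 (N1 + 1))
  · intro n hn; exact h2 n (le_trans (le_max_left _ _) hn)
  · intro n hn
    cases n with
    | zero => simp
    | succ k => simp [h1 k (by omega)]
  · intro θ
    have lhs : ∑ᶠ n, θ ^ n • m.coeff n ((X : Polynomial ℂ) • a) b = m.mul θ ((X : Polynomial ℂ) • a) b := rfl
    have rhs : ∑ᶠ n, θ ^ n • pshift (fun k => - m.coeff k a b) n = (-θ) • m.mul θ a b := by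
      have hb : ∀ n, N1 + 1 ≤ n → pshift (fun k => - m.coeff k a b) n = 0 := by
        intro n hn
        cases n with
        | zero => simp
        | succ k => simp [h1 k (by omega)]
      rw [finsum_eq_range (f := fun n => θ ^ n • pshift (fun k => - m.coeff k a b) n)
        (fun n hn => by simp [hb n hn]), Finset.sum_range_succ']
      simp only [pshift_zero, pshift_succ, pow_zero, smul_zero, add_zero]
      have hm : m.mul θ a b = ∑ k ∈ Finset.range N1, θ ^ k • m.coeff k a b :=
        finsum_eq_range (fun n hn => by simp [h1 n hn])
      rw [hm, Finset.smul_sum]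
      apply Finset.sum_congr rfl
      intro k _
      module
    rw [lhs, rhs, hsl θ a b]
  
/-- Coefficient form of right sesquilinearity. -/
lemma coeff_X_right
    (hsr : ∀ (lam : ℂ) (a b : L), m.mul lam a ((X : Polynomial ℂ) • b) =
      (X : Polynomial ℂ) • m.mul lam a b + lam • m.mul lam a b)
    (a b : L) :
    (fun n => m.coeff n a ((X : Polynomial ℂ) • b)) =
      fun n => (X : Polynomial ℂ) • m.coeff n a b + pshift (fun k => m.coeff k a b) n := by
  obtain ⟨N1, h1⟩ := m.coeff_finite a b
  obtain ⟨N2, h2⟩ := m.coeff_finite a ((X : Polynomial ℂ) • b)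
  apply ext_one' (N := max N2 (N1 + 1))
  · intro n hn; exact h2 n (le_trans (le_max_left _ _) hn)
  · intro n hn
    have hn1 : N1 + 1 ≤ n := le_trans (le_max_right _ _) hn
    cases n with
    | zero => omega
    | succ k => simp [h1 k (by omega), h1 (k+1) (by omega)]
  · intro θ
    have lhs : ∑ᶠ n, θ ^ n • m.coeff n a ((X : Polynomial ℂ) • b) = m.mul θ a ((X : Polynomial ℂ) • b) := rfl
    rw [lhs, hsr θ a b]
    have hbX : ∀ n, N1 + 1 ≤ n → (X : Polynomial ℂ) • m.coeff n a b
        + pshift (fun k => m.coeff k a b) n = 0 := by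
      intro n hn
      cases n with
      | zero => omega
      | succ k => simp [h1 k (by omega), h1 (k+1) (by omega)]
    rw [finsum_eq_range (f := fun n => θ ^ n • ((X : Polynomial ℂ) • m.coeff n a b
        + pshift (fun k => m.coeff k a b) n)) (fun n hn => by simp [hbX n hn])]
    have e1 : ∑ n ∈ Finset.range (N1+1), θ ^ n • ((X : Polynomial ℂ) • m.coeff n a b
          + pshift (fun k => m.coeff k a b) n)
        = (∑ n ∈ Finset.range (N1+1), θ ^ n • (X : Polynomial ℂ) • m.coeff n a b)
          + ∑ n ∈ Finset.range (N1+1), θ ^ n • pshift (fun k => m.coeff k a b) n := by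
      rw [← Finset.sum_add_distrib]
      exact Finset.sum_congr rfl fun n _ => smul_add _ _ _
    rw [e1]
    congr 1
    · have hm : m.mul θ a b = ∑ n ∈ Finset.range (N1+1), θ ^ n • m.coeff n a b :=
        finsum_eq_range (fun n hn => by simp [h1 n (by omega)])
      rw [hm, Finset.smul_sum]
      exact Finset.sum_congr rfl fun n _ => smul_comm _ _ _
    · rw [Finset.sum_range_succ']
      simp only [pshift_zero, pshift_succ, pow_zero, smul_zero, add_zero]
      have hm : m.mul θ a b = ∑ n ∈ Finset.range N1, θ ^ n • m.coeff n a b :=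
        finsum_eq_range (fun n hn => by simp [h1 n hn])
      rw [hm, Finset.smul_sum]
      apply Finset.sum_congr rfl
      intro k _
      module

end ConformalProduct
end Part3
section Part4
set_option linter.unusedSectionVars false
set_option maxHeartbeats 1000000

variable {L : Type*} [AddCommGroup L] [Module ℂ L]
  [Module (Polynomial ℂ) L] [IsScalarTower ℂ (Polynomial ℂ) L]

/-- 1-variable transport: equality of polynomial families at all complex points
extends to all polynomial points. -/
lemma ext_ev {f g : ℕ → L} {N : ℕ} (hf : ∀ n, N ≤ n → f n = 0) (hg : ∀ n, N ≤ n → g n = 0)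
    (h : ∀ θ : ℂ, ev f (C θ) = ev g (C θ)) : ∀ q : Polynomial ℂ, ev f q = ev g q := by
  have : f = g := ext_one' hf hg (fun θ => by rw [← ev_C, ← ev_C]; exact h θ)
  intro q; rw [this]

namespace ConformalProduct

variable (m : ConformalProduct L)

lemma opmul_X_left
    (hsl : ∀ (lam : ℂ) (a b : L), m.mul lam ((X : Polynomial ℂ) • a) b = (-lam) • m.mul lam a b)
    (q : Polynomial ℂ) (a b : L) :
    m.opmul q ((X : Polynomial ℂ) • a) b = (-q) • m.opmul q a b := by
  unfold opmul
  rw [coeff_X_left m hsl a b]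
  obtain ⟨N, h⟩ := m.coeff_finite a b
  rw [ev_pshift (f := fun k => - m.coeff k a b) (N := N) (fun n hn => by simp [h n hn]) q,
    ev_neg, smul_neg, neg_smul]

lemma opmul_X_right
    (hsr : ∀ (lam : ℂ) (a b : L), m.mul lam a ((X : Polynomial ℂ) • b) =
      (X : Polynomial ℂ) • m.mul lam a b + lam • m.mul lam a b)
    (q : Polynomial ℂ) (a b : L) :
    m.opmul q a ((X : Polynomial ℂ) • b) = ((X : Polynomial ℂ) + q) • m.opmul q a b := by
  unfold opmul
  rw [coeff_X_right m hsr a b]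
  obtain ⟨N, h⟩ := m.coeff_finite a b
  rw [ev_add (N := N + 1)
    (f := fun n => (X : Polynomial ℂ) • m.coeff n a b)
    (g := pshift (fun k => m.coeff k a b))
    (fun n hn => by simp [h n (by omega)])
    (fun n hn => by cases n with
      | zero => simp
      | succ k => simp [h k (by omega)]) q,
    ev_psmul (X : Polynomial ℂ) h q, ev_pshift h q, add_smul]

lemma opmul_Xpow_left
    (hsl : ∀ (lam : ℂ) (a b : L), m.mul lam ((X : Polynomial ℂ) • a) b = (-lam) • m.mul lam a b)
    (q : Polynomial ℂ) (k : ℕ) (a b : L) :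
    m.opmul q (((X : Polynomial ℂ) ^ k) • a) b = ((-q) ^ k) • m.opmul q a b := by
  induction k with
  | zero => simp
  | succ n ih =>
    have e : ((X : Polynomial ℂ) ^ (n+1)) • a = (X : Polynomial ℂ) • (((X : Polynomial ℂ) ^ n) • a) := by
      rw [smul_smul, ← pow_succ']
    rw [e, opmul_X_left m hsl, ih, smul_smul, ← pow_succ']

lemma opmul_Xpow_right
    (hsr : ∀ (lam : ℂ) (a b : L), m.mul lam a ((X : Polynomial ℂ) • b) =
      (X : Polynomial ℂ) • m.mul lam a b + lam • m.mul lam a b)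
    (q : Polynomial ℂ) (k : ℕ) (a b : L) :
    m.opmul q a (((X : Polynomial ℂ) ^ k) • b) = (((X : Polynomial ℂ) + q) ^ k) • m.opmul q a b := by
  induction k with
  | zero => simp
  | succ n ih =>
    have e : ((X : Polynomial ℂ) ^ (n+1)) • b = (X : Polynomial ℂ) • (((X : Polynomial ℂ) ^ n) • b) := by
      rw [smul_smul, ← pow_succ']
    rw [e, opmul_X_right m hsr, ih, smul_smul, ← pow_succ']

lemma opmul_poly_left
    (hsl : ∀ (lam : ℂ) (a b : L), m.mul lam ((X : Polynomial ℂ) • a) b = (-lam) • m.mul lam a b)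
    (q r : Polynomial ℂ) (a b : L) :
    m.opmul q (r • a) b = (r.comp (-q)) • m.opmul q a b := by
  induction r using Polynomial.induction_on' with
  | add p s hp hs => rw [add_smul, m.opmul_add_left, hp, hs, Polynomial.add_comp, add_smul]
  | monomial n c =>
    rw [← Polynomial.C_mul_X_pow_eq_monomial, mul_smul, C_smul, m.opmul_smul_left,
      m.opmul_Xpow_left hsl, Polynomial.mul_comp, Polynomial.C_comp, Polynomial.pow_comp,
      Polynomial.X_comp, mul_smul, C_smul]

lemma opmul_poly_right
    (hsr : ∀ (lam : ℂ) (a b : L), m.mul lam a ((X : Polynomial ℂ) • b) =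
      (X : Polynomial ℂ) • m.mul lam a b + lam • m.mul lam a b)
    (q r : Polynomial ℂ) (a b : L) :
    m.opmul q a (r • b) = (r.comp ((X : Polynomial ℂ) + q)) • m.opmul q a b := by
  induction r using Polynomial.induction_on' with
  | add p s hp hs => rw [add_smul, m.opmul_add_right, hp, hs, Polynomial.add_comp, add_smul]
  | monomial n c =>
    rw [← Polynomial.C_mul_X_pow_eq_monomial, mul_smul, C_smul, m.opmul_smul_right,
      m.opmul_Xpow_right hsr, Polynomial.mul_comp, Polynomial.C_comp, Polynomial.pow_comp,
      Polynomial.X_comp, mul_smul, C_smul]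

end ConformalProduct

/-- The conjugation operator on coefficient families, implementing λ ↦ -∂-λ. -/
def Dop (f : ℕ → L) : ℕ → L := fun n =>
  ∑ᶠ k, (((-1 : ℂ)) ^ k * (k.choose n : ℂ)) • (((X : Polynomial ℂ) ^ (k - n)) • f k)

lemma Dop_bound {f : ℕ → L} {N : ℕ} (h : ∀ n, N ≤ n → f n = 0) :
    ∀ n, N ≤ n → Dop f n = 0 := by
  intro n hn
  unfold Dop
  rw [show (fun k => (((-1 : ℂ)) ^ k * (k.choose n : ℂ)) • (((X : Polynomial ℂ) ^ (k - n)) • f k))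
      = fun _ => (0 : L) from ?_, finsum_zero]
  funext k
  by_cases hk : k < n
  · rw [Nat.choose_eq_zero_of_lt hk]
    simp
  · rw [h k (by omega)]
    simp

lemma Dop_eq_range {f : ℕ → L} {N : ℕ} (h : ∀ n, N ≤ n → f n = 0) (n : ℕ) :
    Dop f n = ∑ k ∈ Finset.range N, (((-1 : ℂ)) ^ k * (k.choose n : ℂ)) •
      (((X : Polynomial ℂ) ^ (k - n)) • f k) :=
  finsum_eq_range (fun k hk => by simp [h k hk])

/-- Key lemma: `Dop` implements the substitution `λ ↦ -∂-λ` on evaluations. -/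
lemma ev_Dop {f : ℕ → L} {N : ℕ} (h : ∀ n, N ≤ n → f n = 0) (q : Polynomial ℂ) :
    ev (Dop f) q = ev f (-((X : Polynomial ℂ) + q)) := by
  rw [ev_eq_range (Dop_bound h) q, ev_eq_range h]
  have e1 : ∀ n ∈ Finset.range N, q ^ n • Dop f n
      = ∑ k ∈ Finset.range N, q ^ n • ((((-1 : ℂ)) ^ k * (k.choose n : ℂ)) •
        (((X : Polynomial ℂ) ^ (k - n)) • f k)) := by
    intro n _
    rw [Dop_eq_range h n, Finset.smul_sum]
  rw [Finset.sum_congr rfl e1, Finset.sum_comm]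
  apply Finset.sum_congr rfl
  intro k hk
  have hkN : k + 1 ≤ N := Finset.mem_range.mp hk
  have e2 : ∑ n ∈ Finset.range N, q ^ n • ((((-1 : ℂ)) ^ k * (k.choose n : ℂ)) •
      (((X : Polynomial ℂ) ^ (k - n)) • f k))
      = ∑ n ∈ Finset.range (k+1), q ^ n • ((((-1 : ℂ)) ^ k * (k.choose n : ℂ)) •
      (((X : Polynomial ℂ) ^ (k - n)) • f k)) := by
    symm
    apply Finset.sum_subset (Finset.range_subset_range.mpr hkN)
    intro n _ hn
    rw [Nat.choose_eq_zero_of_lt (by simpa using hn)]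
    simp
  rw [e2]
  have e3 : ∀ n, q ^ n • ((((-1 : ℂ)) ^ k * (k.choose n : ℂ)) •
      (((X : Polynomial ℂ) ^ (k - n)) • f k))
      = ((C ((-1 : ℂ) ^ k * (k.choose n : ℂ))) * (q ^ n * (X : Polynomial ℂ) ^ (k - n))) • f k := by
    intro n
    rw [smul_comm (q ^ n), ← C_smul ((-1 : ℂ) ^ k * (k.choose n : ℂ)), smul_smul, smul_smul,
      mul_assoc]
  rw [Finset.sum_congr rfl (fun n _ => e3 n), ← Finset.sum_smul]
  congr 1
  have : (-((X : Polynomial ℂ) + q)) ^ k = (-1 : Polynomial ℂ) ^ k * (q + X) ^ k := by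
    rw [neg_pow]
    ring_nf
  rw [this, add_pow]
  rw [Finset.mul_sum]
  apply Finset.sum_congr rfl
  intro n _
  have hc : (C ((-1 : ℂ) ^ k * (k.choose n : ℂ)) : Polynomial ℂ)
      = (-1 : Polynomial ℂ) ^ k * (C (k.choose n : ℂ)) := by
    rw [map_mul, map_pow, map_neg, map_one]
  rw [hc, Polynomial.C_eq_natCast]
  ring

end Part4
section Part5
set_option linter.unusedSectionVars false
set_option maxHeartbeats 1000000

variable {L : Type*} [AddCommGroup L] [Module ℂ L]
  [Module (Polynomial ℂ) L] [IsScalarTower ℂ (Polynomial ℂ) L]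

/-- Triangle reindexing for double sums. -/
lemma triangle {M : Type*} [AddCommMonoid M] (N : ℕ) (g : ℕ → ℕ → M) :
    ∑ m ∈ Finset.range N, ∑ a ∈ Finset.range (m+1), g a (m - a)
      = ∑ a ∈ Finset.range N, ∑ k ∈ Finset.range (N - a), g a k := by
  induction N with
  | zero => simp
  | succ n ih =>
    rw [Finset.sum_range_succ, ih]
    have e1 : ∑ a ∈ Finset.range (n+1), g a (n - a)
        = ∑ a ∈ Finset.range n, g a (n - a) + g n 0 := by
      rw [Finset.sum_range_succ, Nat.sub_self]
    have e2 : ∑ a ∈ Finset.range (n+1), ∑ k ∈ Finset.range (n + 1 - a), g a k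
        = (∑ a ∈ Finset.range n, ∑ k ∈ Finset.range (n + 1 - a), g a k) + g n 0 := by
      rw [Finset.sum_range_succ]
      congr 1
      have e : n + 1 - n = 1 := by omega
      rw [e, Finset.sum_range_one]
    rw [e1, e2, ← add_assoc]
    congr 1
    rw [← Finset.sum_add_distrib]
    apply Finset.sum_congr rfl
    intro a ha
    have ha' : a < n := Finset.mem_range.mp ha
    have : n + 1 - a = (n - a) + 1 := by omega
    rw [this, Finset.sum_range_succ]

/-- Two-variable evaluation of a doubly-indexed family. -/
def Ev2 (F : ℕ → ℕ → L) (q₁ q₂ : Polynomial ℂ) : L :=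
  ∑ᶠ m, ∑ᶠ n, (q₁ ^ m * q₂ ^ n) • F m n

/-- Bound for a doubly-indexed family. -/
def Bdd2 (F : ℕ → ℕ → L) (N : ℕ) : Prop := ∀ m n, N ≤ m ∨ N ≤ n → F m n = 0

lemma Bdd2.mono {F : ℕ → ℕ → L} {N N' : ℕ} (h : Bdd2 F N) (hN : N ≤ N') : Bdd2 F N' :=
  fun m n hmn => h m n (by omega)

lemma Ev2_eq_range {F : ℕ → ℕ → L} {N : ℕ} (h : Bdd2 F N) (q₁ q₂ : Polynomial ℂ) :
    Ev2 F q₁ q₂ = ∑ m ∈ Finset.range N, ∑ n ∈ Finset.range N, (q₁ ^ m * q₂ ^ n) • F m n := by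
  unfold Ev2
  rw [finsum_eq_range (f := fun m => ∑ᶠ n, (q₁ ^ m * q₂ ^ n) • F m n) (N := N)
    (fun m hm => by
      rw [show (fun n => (q₁ ^ m * q₂ ^ n) • F m n) = fun _ => (0:L) from
        funext fun n => by rw [h m n (Or.inl hm), smul_zero], finsum_zero])]
  apply Finset.sum_congr rfl
  intro m _
  exact finsum_eq_range (fun n hn => by rw [h m n (Or.inr hn), smul_zero])

lemma ext2 {F : ℕ → ℕ → L} {N : ℕ} (hF : Bdd2 F N)
    (h : ∀ θ ν : ℂ, Ev2 F (C θ) (C ν) = 0) : ∀ m n, F m n = 0 := by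
  have key : ∀ ν : ℂ, ∀ m, ∑ᶠ n, ν ^ n • F m n = 0 := by
    intro ν
    apply ext_one (N := N) (f := fun m => ∑ᶠ n, ν ^ n • F m n)
    · intro m hm
      show (∑ᶠ n, ν ^ n • F m n) = 0
      rw [show (fun n => ν ^ n • F m n) = fun _ => (0:L) from
        funext fun n => by rw [hF m n (Or.inl hm), smul_zero], finsum_zero]
    · intro θ
      have e : ∑ᶠ (m : ℕ), θ ^ m • ∑ᶠ (n : ℕ), ν ^ n • F m n = Ev2 F (C θ) (C ν) := by
        rw [Ev2_eq_range hF,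
          finsum_eq_range (f := fun m => θ ^ m • ∑ᶠ n, ν ^ n • F m n) (N := N)
          (fun m hm => by
            show θ ^ m • (∑ᶠ n, ν ^ n • F m n) = 0
            rw [show (fun n => ν ^ n • F m n) = fun _ => (0:L) from
              funext fun n => by rw [hF m n (Or.inl hm), smul_zero], finsum_zero, smul_zero])]
        apply Finset.sum_congr rfl
        intro m _
        rw [finsum_eq_range (f := fun n => ν ^ n • F m n)
          (fun n hn => by simp [hF m n (Or.inr hn)]), Finset.smul_sum]
        apply Finset.sum_congr rfl
        intro n _
        rw [smul_smul, ← Polynomial.C_pow, ← Polynomial.C_pow, ← map_mul, C_smul]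
      rw [e, h θ ν]
  intro m n
  revert n
  apply ext_one (N := N) (f := fun n => F m n)
  · intro n hn; exact hF m n (Or.inr hn)

  · intro ν; exact key ν m

/-- A function of two polynomial variables representable by a bounded family. -/
def Rep2 (Φ : Polynomial ℂ → Polynomial ℂ → L) : Prop :=
  ∃ F N, Bdd2 F N ∧ ∀ q₁ q₂, Φ q₁ q₂ = Ev2 F q₁ q₂

lemma rep2_congr {Φ Ψ : Polynomial ℂ → Polynomial ℂ → L}
    (h : ∀ q₁ q₂, Φ q₁ q₂ = Ψ q₁ q₂) (hΦ : Rep2 Φ) : Rep2 Ψ := by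
  obtain ⟨F, N, hB, hev⟩ := hΦ
  exact ⟨F, N, hB, fun q₁ q₂ => (h q₁ q₂).symm.trans (hev q₁ q₂)⟩

/-- The main two-variable transport principle. -/
lemma rep2_ext {Φ Ψ : Polynomial ℂ → Polynomial ℂ → L} (hΦ : Rep2 Φ) (hΨ : Rep2 Ψ)
    (h : ∀ θ ν : ℂ, Φ (C θ) (C ν) = Ψ (C θ) (C ν)) : ∀ q₁ q₂, Φ q₁ q₂ = Ψ q₁ q₂ := by
  obtain ⟨F, N, hBF, hevF⟩ := hΦ
  obtain ⟨G, M, hBG, hevG⟩ := hΨ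
  set K := max N M with hK
  have hBF' : Bdd2 F K := hBF.mono (le_max_left _ _)
  have hBG' : Bdd2 G K := hBG.mono (le_max_right _ _)
  have hsub : Bdd2 (fun m n => F m n - G m n) K := by
    intro m n hmn
    dsimp only
    rw [hBF' m n hmn, hBG' m n hmn, sub_zero]
  have hEv : ∀ q₁ q₂, Ev2 (fun m n => F m n - G m n) q₁ q₂ = Ev2 F q₁ q₂ - Ev2 G q₁ q₂ := by
    intro q₁ q₂
    rw [Ev2_eq_range hsub, Ev2_eq_range hBF', Ev2_eq_range hBG', ← Finset.sum_sub_distrib]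
    apply Finset.sum_congr rfl
    intro m _
    rw [← Finset.sum_sub_distrib]
    exact Finset.sum_congr rfl fun n _ => smul_sub _ _ _
  have hz := ext2 hsub (fun θ ν => by
    rw [hEv, ← hevF, ← hevG, h θ ν, sub_self])
  intro q₁ q₂
  rw [hevF, hevG]
  have : F = G := funext fun m => funext fun n => by
    have := hz m n
    simpa [sub_eq_zero] using this
  rw [this]

lemma rep2_smul (c : ℂ) {Φ : Polynomial ℂ → Polynomial ℂ → L} (hΦ : Rep2 Φ) :
    Rep2 (fun q₁ q₂ => c • Φ q₁ q₂) := by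
  obtain ⟨F, N, hB, hev⟩ := hΦ
  refine ⟨fun m n => c • F m n, N, fun m n hmn => by dsimp only; rw [hB m n hmn, smul_zero], ?_⟩
  intro q₁ q₂
  dsimp only
  rw [hev, Ev2_eq_range hB, Ev2_eq_range (F := fun m n => c • F m n)
    (fun m n hmn => by dsimp only; rw [hB m n hmn, smul_zero]), Finset.smul_sum]
  apply Finset.sum_congr rfl
  intro m _
  rw [Finset.smul_sum]
  exact Finset.sum_congr rfl fun n _ => (smul_comm _ _ _)

lemma rep2_sub {Φ Ψ : Polynomial ℂ → Polynomial ℂ → L} (hΦ : Rep2 Φ) (hΨ : Rep2 Ψ) :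
    Rep2 (fun q₁ q₂ => Φ q₁ q₂ - Ψ q₁ q₂) := by
  obtain ⟨F, N, hBF, hevF⟩ := hΦ
  obtain ⟨G, M, hBG, hevG⟩ := hΨ
  set K := max N M
  have hBF' : Bdd2 F K := hBF.mono (le_max_left _ _)
  have hBG' : Bdd2 G K := hBG.mono (le_max_right _ _)
  refine ⟨fun m n => F m n - G m n, K,
    fun m n hmn => by dsimp only; rw [hBF' m n hmn, hBG' m n hmn, sub_zero], ?_⟩
  intro q₁ q₂
  dsimp only
  rw [hevF, hevG, Ev2_eq_range hBF', Ev2_eq_range hBG',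
    Ev2_eq_range (F := fun m n => F m n - G m n)
      (fun m n hmn => by dsimp only; rw [hBF' m n hmn, hBG' m n hmn, sub_zero]),
    ← Finset.sum_sub_distrib]
  apply Finset.sum_congr rfl
  intro m _
  rw [← Finset.sum_sub_distrib]
  exact Finset.sum_congr rfl fun n _ => (smul_sub _ _ _).symm

lemma rep2_swap {Φ : Polynomial ℂ → Polynomial ℂ → L} (hΦ : Rep2 Φ) :
    Rep2 (fun q₁ q₂ => Φ q₂ q₁) := by
  obtain ⟨F, N, hB, hev⟩ := hΦ
  refine ⟨fun m n => F n m, N, fun m n hmn => hB n m (Or.symm hmn), ?_⟩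
  intro q₁ q₂
  dsimp only
  rw [hev, Ev2_eq_range hB, Ev2_eq_range (F := fun m n => F n m)
    (fun m n hmn => hB n m (Or.symm hmn)), Finset.sum_comm]
  apply Finset.sum_congr rfl
  intro m _
  apply Finset.sum_congr rfl
  intro n _
  rw [mul_comm]

lemma rep2_neg1 {Φ : Polynomial ℂ → Polynomial ℂ → L} (hΦ : Rep2 Φ) :
    Rep2 (fun q₁ q₂ => Φ (-q₁) q₂) := by
  obtain ⟨F, N, hB, hev⟩ := hΦ
  refine ⟨fun m n => ((-1 : ℂ) ^ m) • F m n, N,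
    fun m n hmn => by dsimp only; rw [hB m n hmn, smul_zero], ?_⟩
  intro q₁ q₂
  dsimp only
  rw [hev, Ev2_eq_range hB, Ev2_eq_range (F := fun m n => ((-1 : ℂ) ^ m) • F m n)
    (fun m n hmn => by dsimp only; rw [hB m n hmn, smul_zero])]
  apply Finset.sum_congr rfl
  intro m _
  apply Finset.sum_congr rfl
  intro n _
  rw [smul_comm, ← C_smul ((-1:ℂ)^m), smul_smul]
  congr 1
  rw [map_pow, map_neg, map_one, neg_pow]
  ring

end Part5
section Part6
set_option linter.unusedSectionVars false
set_option maxHeartbeats 2000000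

variable {L : Type*} [AddCommGroup L] [Module ℂ L]
  [Module (Polynomial ℂ) L] [IsScalarTower ℂ (Polynomial ℂ) L]

lemma rep2_shear {Φ : Polynomial ℂ → Polynomial ℂ → L} (hΦ : Rep2 Φ) :
    Rep2 (fun q₁ q₂ => Φ (q₁ + q₂) q₂) := by
  classical
  obtain ⟨F, N, hB, hev⟩ := hΦ
  set G : ℕ → ℕ → L := fun a b =>
    ∑ k ∈ Finset.range (b+1), (((a+k).choose a : ℂ)) • F (a+k) (b-k) with hG
  have hBG : Bdd2 G (2*N) := by
    intro a b hab
    rw [hG]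
    dsimp only
    apply Finset.sum_eq_zero
    intro k hk
    have hk' : k ≤ b := by
      have := Finset.mem_range.mp hk
      omega
    rcases hab with h1 | h1
    · rw [hB (a+k) (b-k) (Or.inl (by omega)), smul_zero]
    · by_cases hc : N ≤ a + k
      · rw [hB _ _ (Or.inl hc), smul_zero]
      · rw [hB _ _ (Or.inr (by omega)), smul_zero]
  refine ⟨G, 2*N, hBG, ?_⟩
  intro p q
  dsimp only
  rw [hev, Ev2_eq_range hB, Ev2_eq_range hBG]
  -- the common "g" family, parametrized by (a, n, k)
  set g : ℕ → ℕ → ℕ → L := fun a n k =>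
    (((a+k).choose a : ℂ)) • ((p ^ a * q ^ (k + n)) • F (a+k) n) with hg
  -- LHS to canonical form
  have stepA : ∀ m ∈ Finset.range N, ∀ n ∈ Finset.range N,
      ((p+q) ^ m * q ^ n) • F m n
        = ∑ a ∈ Finset.range (m+1), ((m.choose a : ℂ)) • ((p ^ a * q ^ ((m-a) + n)) • F m n) := by
    intro m _ n _
    rw [add_pow, Finset.sum_mul, Finset.sum_smul]
    apply Finset.sum_congr rfl
    intro a _
    rw [show p ^ a * q ^ (m - a) * ((m.choose a : ℕ) : Polynomial ℂ) * q ^ n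
        = C ((m.choose a : ℂ)) * (p ^ a * q ^ ((m - a) + n)) from by
      rw [Polynomial.C_eq_natCast, pow_add]; push_cast; ring,
      mul_smul, C_smul]
  have lhs1 : ∑ m ∈ Finset.range N, ∑ n ∈ Finset.range N, ((p+q) ^ m * q ^ n) • F m n
      = ∑ a ∈ Finset.range (2*N), ∑ n ∈ Finset.range N, ∑ k ∈ Finset.range N, g a n k := by
    rw [Finset.sum_congr rfl (fun m hm => Finset.sum_congr rfl (fun n hn => stepA m hm n hn))]
    rw [Finset.sum_comm]
    -- now: ∑ n < N, ∑ m < N, ∑ a < m+1, (choose m a) • ((p^a q^{(m-a)+n}) • F m n)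
    have e1 : ∀ n ∈ Finset.range N,
        ∑ m ∈ Finset.range N, ∑ a ∈ Finset.range (m+1),
          ((m.choose a : ℂ)) • ((p ^ a * q ^ ((m-a) + n)) • F m n)
        = ∑ a ∈ Finset.range (2*N), ∑ k ∈ Finset.range N, g a n k := by
      intro n _
      have tri := triangle N (fun a k => g a n k)
      have e2 : ∑ m ∈ Finset.range N, ∑ a ∈ Finset.range (m+1),
          ((m.choose a : ℂ)) • ((p ^ a * q ^ ((m-a) + n)) • F m n)
          = ∑ m ∈ Finset.range N, ∑ a ∈ Finset.range (m+1), g a n (m - a) := by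
        apply Finset.sum_congr rfl
        intro m _
        apply Finset.sum_congr rfl
        intro a ha
        have ham : a ≤ m := by
          have := Finset.mem_range.mp ha; omega
        rw [hg]
        dsimp only
        rw [show a + (m - a) = m from by omega]
      rw [e2, tri]
      -- now extend ranges
      have e3 : ∀ a ∈ Finset.range N,
          ∑ k ∈ Finset.range (N - a), g a n k = ∑ k ∈ Finset.range N, g a n k := by
        intro a _
        apply Finset.sum_subset (Finset.range_subset_range.mpr (by omega))
        intro k _ hk
        have : N - a ≤ k := by
          by_contra hc
          exact hk (Finset.mem_range.mpr (by omega))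
        rw [hg]; dsimp only
        rw [hB (a+k) n (Or.inl (by omega)), smul_zero, smul_zero]
      rw [Finset.sum_congr rfl e3]
      apply Finset.sum_subset (Finset.range_subset_range.mpr (by omega))
      intro a _ ha
      have haN : N ≤ a := by
        by_contra hc
        exact ha (Finset.mem_range.mpr (by omega))
      apply Finset.sum_eq_zero
      intro k _
      rw [hg]; dsimp only
      rw [hB (a+k) n (Or.inl (by omega)), smul_zero, smul_zero]
    rw [Finset.sum_congr rfl e1, Finset.sum_comm]
  rw [lhs1]
  -- RHS to canonical form
  apply Finset.sum_congr rfl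
  intro a _
  have r1 : ∀ b ∈ Finset.range (2*N),
      (p ^ a * q ^ b) • G a b
      = ∑ k ∈ Finset.range (b+1), g a (b - k) k := by
    intro b _
    rw [hG]
    dsimp only
    rw [Finset.smul_sum]
    apply Finset.sum_congr rfl
    intro k hk
    have hkb : k ≤ b := by have := Finset.mem_range.mp hk; omega
    rw [hg]
    dsimp only
    rw [show k + (b - k) = b from by omega, smul_comm]
  rw [Finset.sum_congr rfl r1]
  -- triangle in (b,k)
  have tri2 := triangle (2*N) (fun k n => g a n k)
  have e4 : ∑ b ∈ Finset.range (2*N), ∑ k ∈ Finset.range (b+1), g a (b - k) k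
      = ∑ b ∈ Finset.range (2*N), ∑ k ∈ Finset.range (b+1), (fun k n => g a n k) k (b - k) := by
    apply Finset.sum_congr rfl
    intro b _
    apply Finset.sum_congr rfl
    intro k _
    rfl
  rw [e4, tri2]
  -- now: ∑ k < 2N, ∑ n < 2N - k, g a n k ; target: ∑ n < N, ∑ k < N, g a n k
  have e5 : ∀ k ∈ Finset.range (2*N), k ∉ Finset.range N →
      ∑ n ∈ Finset.range (2*N - k), g a n k = 0 := by
    intro k _ hk
    have hkN : N ≤ k := by
      by_contra hc
      exact hk (Finset.mem_range.mpr (by omega))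
    apply Finset.sum_eq_zero
    intro n _
    rw [hg]; dsimp only
    rw [hB (a+k) n (Or.inl (by omega)), smul_zero, smul_zero]
  rw [← Finset.sum_subset (Finset.range_subset_range.mpr (by omega : N ≤ 2*N)) e5]
  have e6 : ∀ k ∈ Finset.range N,
      ∑ n ∈ Finset.range (2*N - k), g a n k = ∑ n ∈ Finset.range N, g a n k := by
    intro k hk
    have hkN : k < N := Finset.mem_range.mp hk
    symm
    apply Finset.sum_subset (Finset.range_subset_range.mpr (by omega))
    intro n _ hn
    have hnN : N ≤ n := by
      by_contra hc
      exact hn (Finset.mem_range.mpr (by omega))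
    rw [hg]; dsimp only
    rw [hB (a+k) n (Or.inr hnN), smul_zero, smul_zero]
  rw [Finset.sum_congr rfl e6, Finset.sum_comm]

end Part6
section Part7
set_option linter.unusedSectionVars false
set_option maxHeartbeats 2000000

variable {L : Type*} [AddCommGroup L] [Module ℂ L]
  [Module (Polynomial ℂ) L] [IsScalarTower ℂ (Polynomial ℂ) L]

lemma rep2_neg2 {Φ : Polynomial ℂ → Polynomial ℂ → L} (hΦ : Rep2 Φ) :
    Rep2 (fun p q => Φ p (-q)) :=
  rep2_swap (rep2_neg1 (rep2_swap hΦ))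

lemma rep2_t2 {Φ : Polynomial ℂ → Polynomial ℂ → L} (hΦ : Rep2 Φ) :
    Rep2 (fun p q => Φ (q - p) q) := by
  have h := rep2_neg1 (rep2_shear hΦ)
  exact rep2_congr (fun p q => by rw [neg_add_eq_sub]) h

lemma rep2_t1 {Φ : Polynomial ℂ → Polynomial ℂ → L} (hΦ : Rep2 Φ) :
    Rep2 (fun p q => Φ p (q - p)) := by
  have h1 := rep2_swap (rep2_neg2 hΦ)      -- fun p q => Φ q (-p)
  have h2 := rep2_t2 h1                    -- fun p q => Φ q (-(q-p)) = Φ q (p - q)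
  have h3 := rep2_swap h2                  -- fun p q => Φ p (-(p-q)) = Φ p (q - p)
  exact rep2_congr (fun p q => by rw [neg_sub]) h3

lemma rep2_t3 {Φ : Polynomial ℂ → Polynomial ℂ → L} (hΦ : Rep2 Φ) :
    Rep2 (fun p q => Φ (q - p) p) :=
  rep2_t1 (rep2_swap hΦ)

namespace ConformalProduct

variable (m : ConformalProduct L)

lemma opmul_sum_left (q : Polynomial ℂ) {ι : Type*} (s : Finset ι) (f : ι → L) (b : L) :
    m.opmul q (∑ i ∈ s, f i) b = ∑ i ∈ s, m.opmul q (f i) b := by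
  classical
  induction s using Finset.induction_on with
  | empty => simp [m.opmul_zero_left]
  | insert _ _ hni ih =>
    rw [Finset.sum_insert hni, Finset.sum_insert hni, m.opmul_add_left, ih]

lemma opmul_sum_right (q : Polynomial ℂ) {ι : Type*} (s : Finset ι) (f : ι → L) (a : L) :
    m.opmul q a (∑ i ∈ s, f i) = ∑ i ∈ s, m.opmul q a (f i) := by
  classical
  induction s using Finset.induction_on with
  | empty => simp [m.opmul_zero_right]
  | insert _ _ hni ih =>
    rw [Finset.sum_insert hni, Finset.sum_insert hni, m.opmul_add_right, ih]

end ConformalProduct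

/-- Nested-left coefficient family: `(x ⋄₁ y) ⋄₂ z`, inner slot first. -/
def NLfam (m₁ m₂ : ConformalProduct L) (x y z : L) : ℕ → ℕ → L :=
  fun m n => m₂.coeff n (m₁.coeff m x y) z

/-- Nested-right coefficient family: `x ⋄₁ (y ⋄₂ z)`, outer slot first. -/
def NRfam (m₁ m₂ : ConformalProduct L) (x y z : L) : ℕ → ℕ → L :=
  fun m n => m₁.coeff m x (m₂.coeff n y z)

def NL (m₁ m₂ : ConformalProduct L) (x y z : L) (q₁ q₂ : Polynomial ℂ) : L :=
  Ev2 (NLfam m₁ m₂ x y z) q₁ q₂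

def NR (m₁ m₂ : ConformalProduct L) (x y z : L) (q₁ q₂ : Polynomial ℂ) : L :=
  Ev2 (NRfam m₁ m₂ x y z) q₁ q₂

lemma NLfam_bdd (m₁ m₂ : ConformalProduct L) (x y z : L) :
    ∃ N, Bdd2 (NLfam m₁ m₂ x y z) N := by
  obtain ⟨N₀, h₀⟩ := m₁.coeff_finite x y
  choose Nf hNf using fun m => m₂.coeff_finite (m₁.coeff m x y) z
  refine ⟨max N₀ ((Finset.range N₀).sup Nf), fun m n hmn => ?_⟩
  unfold NLfam
  rcases hmn with h1 | h1
  · rw [h₀ m (le_trans (le_max_left _ _) h1)]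
    simp
  · by_cases hm : m < N₀
    · exact hNf m n (le_trans (le_trans (Finset.le_sup (Finset.mem_range.mpr hm))
        (le_max_right _ _)) h1)
    · rw [h₀ m (by omega)]
      simp

lemma NRfam_bdd (m₁ m₂ : ConformalProduct L) (x y z : L) :
    ∃ N, Bdd2 (NRfam m₁ m₂ x y z) N := by
  obtain ⟨N₀, h₀⟩ := m₂.coeff_finite y z
  choose Nf hNf using fun n => m₁.coeff_finite x (m₂.coeff n y z)
  refine ⟨max N₀ ((Finset.range N₀).sup Nf), fun m n hmn => ?_⟩
  unfold NRfam
  rcases hmn with h1 | h1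
  · by_cases hn : n < N₀
    · exact hNf n m (le_trans (le_trans (Finset.le_sup (Finset.mem_range.mpr hn))
        (le_max_right _ _)) h1)
    · rw [h₀ n (by omega)]
      simp
  · rw [h₀ n (le_trans (le_max_left _ _) h1)]
    simp

lemma rep2_NL (m₁ m₂ : ConformalProduct L) (x y z : L) : Rep2 (NL m₁ m₂ x y z) := by
  obtain ⟨N, hN⟩ := NLfam_bdd m₁ m₂ x y z
  exact ⟨NLfam m₁ m₂ x y z, N, hN, fun _ _ => rfl⟩

lemma rep2_NR (m₁ m₂ : ConformalProduct L) (x y z : L) : Rep2 (NR m₁ m₂ x y z) := by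
  obtain ⟨N, hN⟩ := NRfam_bdd m₁ m₂ x y z
  exact ⟨NRfam m₁ m₂ x y z, N, hN, fun _ _ => rfl⟩

/-- Shape lemma: a nested product `(x ⋄₁_{[q]} y) ⋄₂_{[r]} z` as a two-variable evaluation. -/
lemma shape_NL (m₁ m₂ : ConformalProduct L)
    (hsl₂ : ∀ (lam : ℂ) (a b : L), m₂.mul lam ((X : Polynomial ℂ) • a) b = (-lam) • m₂.mul lam a b)
    (x y z : L) (q r : Polynomial ℂ) :
    m₂.opmul r (m₁.opmul q x y) z = NL m₁ m₂ x y z (q.comp (-r)) r := by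
  obtain ⟨N, hN⟩ := NLfam_bdd m₁ m₂ x y z
  obtain ⟨N₀, h₀⟩ := m₁.coeff_finite x y
  set K := max N N₀ with hK
  have hNK : Bdd2 (NLfam m₁ m₂ x y z) K := hN.mono (le_max_left _ _)
  have h₀K : ∀ n, K ≤ n → m₁.coeff n x y = 0 := fun n hn => h₀ n (le_trans (le_max_right _ _) hn)
  rw [m₁.opmul_eq_range h₀K, m₂.opmul_sum_left, NL, Ev2_eq_range hNK]
  apply Finset.sum_congr rfl
  intro m _
  rw [show (q ^ m) • m₁.coeff m x y = ((q^m : Polynomial ℂ)) • m₁.coeff m x y from rfl]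
  rw [m₂.opmul_poly_left hsl₂, Polynomial.pow_comp]
  rw [m₂.opmul_eq_range (fun n hn => hNK m n (Or.inr hn))]
  rw [Finset.smul_sum]
  apply Finset.sum_congr rfl
  intro n _
  rw [smul_smul]
  rfl

/-- Shape lemma: a nested product `x ⋄₁_{[q]} (y ⋄₂_{[r]} z)` as a two-variable evaluation. -/
lemma shape_NR (m₁ m₂ : ConformalProduct L)
    (hsr₁ : ∀ (lam : ℂ) (a b : L), m₁.mul lam a ((X : Polynomial ℂ) • b) =
      (X : Polynomial ℂ) • m₁.mul lam a b + lam • m₁.mul lam a b)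
    (x y z : L) (q r : Polynomial ℂ) :
    m₁.opmul q x (m₂.opmul r y z) = NR m₁ m₂ x y z q (r.comp ((X : Polynomial ℂ) + q)) := by
  obtain ⟨N, hN⟩ := NRfam_bdd m₁ m₂ x y z
  obtain ⟨N₀, h₀⟩ := m₂.coeff_finite y z
  set K := max N N₀ with hK
  have hNK : Bdd2 (NRfam m₁ m₂ x y z) K := hN.mono (le_max_left _ _)
  have h₀K : ∀ n, K ≤ n → m₂.coeff n y z = 0 := fun n hn => h₀ n (le_trans (le_max_right _ _) hn)
  rw [m₂.opmul_eq_range h₀K, m₁.opmul_sum_right, NR, Ev2_eq_range hNK]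
  -- LHS: ∑ n < K, m₁.opmul q x ((r^n) • coeff n y z)
  -- RHS: ∑ m < K, ∑ n < K, (q^m (r.comp(X+q))^n) • NRfam
  rw [Finset.sum_comm]
  apply Finset.sum_congr rfl
  intro n _
  rw [show (r ^ n) • m₂.coeff n y z = ((r^n : Polynomial ℂ)) • m₂.coeff n y z from rfl]
  rw [m₁.opmul_poly_right hsr₁, Polynomial.pow_comp]
  rw [m₁.opmul_eq_range (fun mm hmm => hNK mm n (Or.inl hmm))]
  rw [Finset.smul_sum]
  apply Finset.sum_congr rfl
  intro mm _
  rw [smul_smul, mul_comm]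
  rfl

end Part7
section Part8
set_option linter.unusedSectionVars false
set_option maxHeartbeats 2000000
set_option synthInstance.maxHeartbeats 1000000

lemma zmod2_cases (i : ZMod 2) : i = 0 ∨ i = 1 := by
  fin_cases i
  · exact Or.inl rfl
  · exact Or.inr rfl

lemma sgn_symm (i j : ZMod 2) : sgn i j = sgn j i := by
  unfold sgn; rw [mul_comm]

lemma sgn_mul_self (i j : ZMod 2) : sgn i j * sgn i j = 1 := by
  unfold sgn
  rw [← pow_add, ← two_mul, pow_mul]
  norm_num

lemma val_zero' : (0 : ZMod 2).val = 0 := rfl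
lemma val_one' : (1 : ZMod 2).val = 1 := rfl
lemma val_two' : ((1 : ZMod 2) + 1).val = 0 := rfl

lemma sgn_add_left (i j k : ZMod 2) : sgn (i + j) k = sgn i k * sgn j k := by
  rcases zmod2_cases i with hi | hi <;> rcases zmod2_cases j with hj | hj <;>
    rcases zmod2_cases k with hk | hk <;> subst hi <;> subst hj <;> subst hk <;>
    simp only [sgn, add_zero, zero_add, val_zero', val_one', val_two'] <;> norm_num

lemma sgn_add_right (i j k : ZMod 2) : sgn i (j + k) = sgn i j * sgn i k := by
  rw [sgn_symm, sgn_add_left, sgn_symm j i, sgn_symm k i]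

lemma sgn_sq_smul {L : Type*} [AddCommGroup L] [Module ℂ L] (i j : ZMod 2) (v : L) :
    sgn i j • sgn i j • v = v := by
  rw [smul_smul, sgn_mul_self, one_smul]

variable {L : Type*} [AddCommGroup L] [Module ℂ L]
  [Module (Polynomial ℂ) L] [IsScalarTower ℂ (Polynomial ℂ) L]

namespace SuperModule

variable (S : SuperModule L)

/-- The projection onto the `i`-th graded component. -/
def proj (i : ZMod 2) : L → L := fun a =>
  ((LinearEquiv.ofBijective (DirectSum.coeLinearMap S.grade) S.isInternal).symm a i : L)

lemma proj_mem (i : ZMod 2) (a : L) : S.proj i a ∈ S.grade i := SetLike.coe_mem _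

lemma proj_add (i : ZMod 2) (a b : L) : S.proj i (a + b) = S.proj i a + S.proj i b := by
  unfold proj
  rw [map_add]
  rfl

lemma proj_smul (i : ZMod 2) (c : ℂ) (a : L) : S.proj i (c • a) = c • S.proj i a := by
  unfold proj
  rw [map_smul]
  rfl

lemma proj_of_mem {i : ZMod 2} {a : L} (ha : a ∈ S.grade i) : S.proj i a = a := by
  unfold proj
  rw [S.isInternal.ofBijective_coeLinearMap_of_mem ha]

lemma proj_of_mem_ne {i j : ZMod 2} {a : L} (ha : a ∈ S.grade i) (hij : i ≠ j) :
    S.proj j a = 0 := by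
  unfold proj
  rw [S.isInternal.ofBijective_coeLinearMap_of_mem_ne hij ha]
  rfl

lemma proj_total (a : L) : a = S.proj 0 a + S.proj 1 a := by
  set e := LinearEquiv.ofBijective (DirectSum.coeLinearMap S.grade) S.isInternal with he
  have h1 : ∑ i : ZMod 2, DirectSum.of (fun i => S.grade i) i (e.symm a i) = e.symm a :=
    DirectSum.sum_univ_of _
  have h2 := congrArg e h1
  rw [LinearEquiv.apply_symm_apply, map_sum] at h2
  have huniv : (Finset.univ : Finset (ZMod 2)) = {0, 1} := by decide
  rw [huniv, Finset.sum_insert (by decide), Finset.sum_singleton] at h2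
  have h3 : ∀ (i : ZMod 2) (x : S.grade i), e (DirectSum.of (fun i => S.grade i) i x) = x := by
    intro i x
    rw [he]; exact DirectSum.coeLinearMap_of S.grade i x
  rw [h3, h3] at h2
  exact h2.symm

lemma proj_eq_of_decomp {a u v : L} (hu : u ∈ S.grade 0) (hv : v ∈ S.grade 1)
    (h : a = u + v) : S.proj 0 a = u ∧ S.proj 1 a = v := by
  constructor
  · rw [h, S.proj_add, S.proj_of_mem hu, S.proj_of_mem_ne hv (by decide), add_zero]
  · rw [h, S.proj_add, S.proj_of_mem hv, S.proj_of_mem_ne hu (by decide), zero_add]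

lemma proj_X_smul (i : ZMod 2) (a : L) :
    S.proj i ((X : Polynomial ℂ) • a) = (X : Polynomial ℂ) • S.proj i a := by
  have hdec : (X : Polynomial ℂ) • a
      = (X : Polynomial ℂ) • S.proj 0 a + (X : Polynomial ℂ) • S.proj 1 a := by
    rw [← smul_add, ← S.proj_total a]
  have h := S.proj_eq_of_decomp (S.X_smul_mem 0 _ (S.proj_mem 0 a))
    (S.X_smul_mem 1 _ (S.proj_mem 1 a)) hdec
  rcases zmod2_cases i with hi | hi <;> subst hi
  · exact h.1
  · exact h.2

lemma Xpow_smul_mem (i : ZMod 2) (k : ℕ) {a : L} (ha : a ∈ S.grade i) :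
    ((X : Polynomial ℂ) ^ k) • a ∈ S.grade i := by
  induction k with
  | zero => simpa using ha
  | succ n ih =>
    have : ((X : Polynomial ℂ) ^ (n+1)) • a = (X : Polynomial ℂ) • (((X : Polynomial ℂ) ^ n) • a) := by
      rw [smul_smul, ← pow_succ']
    rw [this]
    exact S.X_smul_mem i _ ih

end SuperModule

lemma finsum_mem_submodule {ι : Type*} (G : Submodule ℂ L) (f : ι → L)
    (h : ∀ i, f i ∈ G) : ∑ᶠ i, f i ∈ G := by
  by_cases hfin : (Function.support f).Finite
  · rw [finsum_eq_sum f hfin]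
    exact Submodule.sum_mem G (fun i _ => h i)
  · rw [finsum_of_infinite_support hfin]
    exact Submodule.zero_mem G

end Part8
section Part9
set_option linter.unusedSectionVars false
set_option maxHeartbeats 2000000
set_option synthInstance.maxHeartbeats 1000000

variable {L : Type*} [AddCommGroup L] [Module ℂ L]
  [Module (Polynomial ℂ) L] [IsScalarTower ℂ (Polynomial ℂ) L]

lemma Dop_add {f g : ℕ → L} {N : ℕ} (hf : ∀ n, N ≤ n → f n = 0) (hg : ∀ n, N ≤ n → g n = 0) :
    Dop (fun k => f k + g k) = fun n => Dop f n + Dop g n := by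
  funext n
  unfold Dop
  rw [finsum_eq_range (N := N) (fun k hk => by simp [hf k hk, hg k hk]),
    finsum_eq_range (N := N) (fun k hk => by simp [hf k hk]),
    finsum_eq_range (N := N) (fun k hk => by simp [hg k hk]),
    ← Finset.sum_add_distrib]
  apply Finset.sum_congr rfl
  intro k _
  rw [smul_add, smul_add]

lemma Dop_csmul (c : ℂ) (f : ℕ → L) :
    Dop (fun k => c • f k) = fun n => c • Dop f n := by
  funext n
  unfold Dop
  rw [smul_finsum]
  apply finsum_congr
  intro k
  show ((-1:ℂ)^k * (k.choose n : ℂ)) • ((X : Polynomial ℂ)^(k-n)) • (c • f k)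
      = c • ((-1:ℂ)^k * (k.choose n : ℂ)) • ((X : Polynomial ℂ)^(k-n)) • f k
  rw [smul_comm ((X : Polynomial ℂ)^(k-n)) c, smul_comm ((-1:ℂ)^k * (k.choose n : ℂ)) c]

lemma Dop_zero : Dop (fun _ => (0 : L)) = fun _ => 0 := by
  funext n
  unfold Dop
  simp

/-- The conjugated family of a conformal product in given arguments. -/
def Dfun (p : ConformalProduct L) (x y : L) : ℕ → L := Dop (fun k => p.coeff k x y)

lemma Dfun_add_left (p : ConformalProduct L) (x x' y : L) :
    Dfun p (x + x') y = fun n => Dfun p x y n + Dfun p x' y n := by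
  unfold Dfun
  obtain ⟨N1, h1⟩ := p.coeff_finite x y
  obtain ⟨N2, h2⟩ := p.coeff_finite x' y
  rw [show (fun k => p.coeff k (x + x') y) = fun k => p.coeff k x y + p.coeff k x' y from
    funext fun k => by simp [map_add]]
  exact Dop_add (N := max N1 N2) (fun n hn => h1 n (by omega)) (fun n hn => h2 n (by omega))

lemma Dfun_add_right (p : ConformalProduct L) (x y y' : L) :
    Dfun p x (y + y') = fun n => Dfun p x y n + Dfun p x y' n := by
  unfold Dfun
  obtain ⟨N1, h1⟩ := p.coeff_finite x y
  obtain ⟨N2, h2⟩ := p.coeff_finite x y'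
  rw [show (fun k => p.coeff k x (y + y')) = fun k => p.coeff k x y + p.coeff k x y' from
    funext fun k => by simp [map_add]]
  exact Dop_add (N := max N1 N2) (fun n hn => h1 n (by omega)) (fun n hn => h2 n (by omega))

lemma Dfun_smul_left (p : ConformalProduct L) (c : ℂ) (x y : L) :
    Dfun p (c • x) y = fun n => c • Dfun p x y n := by
  unfold Dfun
  rw [show (fun k => p.coeff k (c • x) y) = fun k => c • p.coeff k x y from
    funext fun k => by simp [map_smul]]
  exact Dop_csmul c _

lemma Dfun_smul_right (p : ConformalProduct L) (c : ℂ) (x y : L) :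
    Dfun p x (c • y) = fun n => c • Dfun p x y n := by
  unfold Dfun
  rw [show (fun k => p.coeff k x (c • y)) = fun k => c • p.coeff k x y from
    funext fun k => by simp [map_smul]]
  exact Dop_csmul c _

lemma Dfun_zero_left (p : ConformalProduct L) (y : L) :
    Dfun p 0 y = fun _ => 0 := by
  unfold Dfun
  rw [show (fun k => p.coeff k 0 y) = fun _ => (0:L) from funext fun k => by simp]
  exact Dop_zero

lemma Dfun_zero_right (p : ConformalProduct L) (x : L) :
    Dfun p x 0 = fun _ => 0 := by
  unfold Dfun
  rw [show (fun k => p.coeff k x 0) = fun _ => (0:L) from funext fun k => by simp]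
  exact Dop_zero

lemma Dfun_bound (p : ConformalProduct L) {x y : L} {N : ℕ}
    (h : ∀ n, N ≤ n → p.coeff n x y = 0) : ∀ n, N ≤ n → Dfun p x y n = 0 :=
  Dop_bound h

/-- The underlying function of the commutator bracket coefficients. -/
def brfun (S : SuperModule L) (p : ConformalProduct L) (a b : L) : ℕ → L := fun n =>
  p.coeff n a b - ∑ i : ZMod 2, ∑ j : ZMod 2, sgn i j • Dfun p (S.proj j b) (S.proj i a) n

lemma brfun_add_left (S : SuperModule L) (p : ConformalProduct L) (a a' b : L) (n : ℕ) :
    brfun S p (a + a') b n = brfun S p a b n + brfun S p a' b n := by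
  unfold brfun
  rw [map_add, LinearMap.add_apply]
  have e : ∀ i j : ZMod 2, sgn i j • Dfun p (S.proj j b) (S.proj i (a + a')) n
      = sgn i j • Dfun p (S.proj j b) (S.proj i a) n
        + sgn i j • Dfun p (S.proj j b) (S.proj i a') n := by
    intro i j
    rw [S.proj_add, Dfun_add_right, smul_add]
  rw [Finset.sum_congr rfl (fun i _ => Finset.sum_congr rfl (fun j _ => e i j))]
  rw [Finset.sum_congr rfl (fun i (_ : i ∈ Finset.univ) => Finset.sum_add_distrib),
    Finset.sum_add_distrib]
  abel

lemma brfun_add_right (S : SuperModule L) (p : ConformalProduct L) (a b b' : L) (n : ℕ) :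
    brfun S p a (b + b') n = brfun S p a b n + brfun S p a b' n := by
  unfold brfun
  rw [map_add]
  have e : ∀ i j : ZMod 2, sgn i j • Dfun p (S.proj j (b + b')) (S.proj i a) n
      = sgn i j • Dfun p (S.proj j b) (S.proj i a) n
        + sgn i j • Dfun p (S.proj j b') (S.proj i a) n := by
    intro i j
    rw [S.proj_add, Dfun_add_left, smul_add]
  rw [Finset.sum_congr rfl (fun i _ => Finset.sum_congr rfl (fun j _ => e i j))]
  rw [Finset.sum_congr rfl (fun i (_ : i ∈ Finset.univ) => Finset.sum_add_distrib),
    Finset.sum_add_distrib]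
  abel

lemma brfun_smul_left (S : SuperModule L) (p : ConformalProduct L) (c : ℂ) (a b : L) (n : ℕ) :
    brfun S p (c • a) b n = c • brfun S p a b n := by
  unfold brfun
  rw [map_smul, LinearMap.smul_apply, smul_sub]
  congr 1
  rw [Finset.smul_sum]
  apply Finset.sum_congr rfl
  intro i _
  rw [Finset.smul_sum]
  apply Finset.sum_congr rfl
  intro j _
  rw [S.proj_smul, Dfun_smul_right]
  rw [smul_comm c]

lemma brfun_smul_right (S : SuperModule L) (p : ConformalProduct L) (c : ℂ) (a b : L) (n : ℕ) :
    brfun S p a (c • b) n = c • brfun S p a b n := by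
  unfold brfun
  rw [map_smul, smul_sub]
  congr 1
  rw [Finset.smul_sum]
  apply Finset.sum_congr rfl
  intro i _
  rw [Finset.smul_sum]
  apply Finset.sum_congr rfl
  intro j _
  rw [S.proj_smul, Dfun_smul_left]
  rw [smul_comm c]

/-- The commutator bracket conformal product `[a_λ b] = a∗_λ b − (−1)^{|a||b|} b ∗_{−∂−λ} a`. -/
def brCP (S : SuperModule L) (p : ConformalProduct L) : ConformalProduct L where
  coeff := fun n => LinearMap.mk₂ ℂ (fun a b => brfun S p a b n)
    (fun a a' b => brfun_add_left S p a a' b n)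
    (fun c a b => brfun_smul_left S p c a b n)
    (fun a b b' => brfun_add_right S p a b b' n)
    (fun c a b => brfun_smul_right S p c a b n)
  coeff_finite := by
    intro a b
    obtain ⟨N₀, h₀⟩ := p.coeff_finite a b
    choose Nf hNf using fun ij : ZMod 2 × ZMod 2 =>
      p.coeff_finite (S.proj ij.2 b) (S.proj ij.1 a)
    refine ⟨max N₀ (Finset.univ.sup Nf), fun n hn => ?_⟩
    show brfun S p a b n = 0
    unfold brfun
    rw [h₀ n (by omega)]
    rw [Finset.sum_congr rfl (fun i (_ : i ∈ Finset.univ) => Finset.sum_congr rfl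
      (fun j (_ : j ∈ Finset.univ) => by
        rw [Dfun_bound p (hNf (i, j)) n
          (le_trans (le_trans (Finset.le_sup (Finset.mem_univ (i,j))) (le_max_right _ _)) hn),
          smul_zero]))]
    simp

lemma brCP_coeff (S : SuperModule L) (p : ConformalProduct L) (n : ℕ) (a b : L) :
    (brCP S p).coeff n a b = brfun S p a b n := rfl

/-- Collapse of the bracket coefficients on homogeneous elements. -/
lemma brfun_homog (S : SuperModule L) (p : ConformalProduct L) {i j : ZMod 2} {a b : L}
    (ha : a ∈ S.grade i) (hb : b ∈ S.grade j) (n : ℕ) :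
    brfun S p a b n = p.coeff n a b - sgn i j • Dfun p b a n := by
  unfold brfun
  congr 1
  have key : ∀ i' j' : ZMod 2, sgn i' j' • Dfun p (S.proj j' b) (S.proj i' a) n
      = if j' = j then (if i' = i then sgn i j • Dfun p b a n else 0) else 0 := by
    intro i' j'
    by_cases hj : j' = j
    · by_cases hi : i' = i
      · subst hi; subst hj
        rw [S.proj_of_mem ha, S.proj_of_mem hb, if_pos rfl, if_pos rfl]
      · rw [S.proj_of_mem_ne ha (fun hc => hi hc.symm), Dfun_zero_right, smul_zero,
          if_pos hj, if_neg hi]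
    · rw [S.proj_of_mem_ne hb (fun hc => hj hc.symm), Dfun_zero_left, smul_zero, if_neg hj]
  rw [Finset.sum_congr rfl (fun i' _ => Finset.sum_congr rfl (fun j' _ => key i' j'))]
  have e1 : ∀ i' : ZMod 2,
      (∑ j' : ZMod 2, if j' = j then (if i' = i then sgn i j • Dfun p b a n else 0) else 0)
      = (if i' = i then sgn i j • Dfun p b a n else 0) := by
    intro i'
    rw [Finset.sum_ite_eq' Finset.univ j (fun _ => if i' = i then sgn i j • Dfun p b a n else 0)]
    simp
  rw [Finset.sum_congr rfl (fun i' _ => e1 i'),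
    Finset.sum_ite_eq' Finset.univ i (fun _ => sgn i j • Dfun p b a n)]
  simp

end Part9
section Part10
set_option linter.unusedSectionVars false
set_option maxHeartbeats 2000000
set_option synthInstance.maxHeartbeats 1000000

variable {L : Type*} [AddCommGroup L] [Module ℂ L]
  [Module (Polynomial ℂ) L] [IsScalarTower ℂ (Polynomial ℂ) L]

lemma ev_sub_csmul {f g : ℕ → L} {N : ℕ} (hf : ∀ n, N ≤ n → f n = 0)
    (hg : ∀ n, N ≤ n → g n = 0) (c : ℂ) (q : Polynomial ℂ) :
    ev (fun n => f n - c • g n) q = ev f q - c • ev g q := by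
  rw [ev_eq_range hf q, ev_eq_range hg q,
    ev_eq_range (f := fun n => f n - c • g n) (fun n hn => by simp [hf n hn, hg n hn]) q,
    Finset.smul_sum, ← Finset.sum_sub_distrib]
  apply Finset.sum_congr rfl
  intro n _
  rw [smul_sub, smul_comm]

lemma ev_Dfun (p : ConformalProduct L) {x y : L} {N : ℕ}
    (h : ∀ n, N ≤ n → p.coeff n x y = 0) (q : Polynomial ℂ) :
    ev (Dfun p x y) q = p.opmul (-((X : Polynomial ℂ) + q)) x y := by
  have : ev (Dfun p x y) q = ev (fun k => p.coeff k x y) (-((X : Polynomial ℂ) + q)) :=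
    ev_Dop h q
  rw [this]
  rfl

/-- Central formula: the bracket at any operator value, on homogeneous elements. -/
lemma br_opmul (S : SuperModule L) (p : ConformalProduct L) {i j : ZMod 2} {a b : L}
    (ha : a ∈ S.grade i) (hb : b ∈ S.grade j) (q : Polynomial ℂ) :
    (brCP S p).opmul q a b
      = p.opmul q a b - sgn i j • p.opmul (-((X : Polynomial ℂ) + q)) b a := by
  obtain ⟨N1, h1⟩ := p.coeff_finite a b
  obtain ⟨N2, h2⟩ := p.coeff_finite b a
  have h2' : ∀ n, max N1 N2 ≤ n → p.coeff n b a = 0 := fun n hn => h2 n (by omega)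
  show ev (fun n => (brCP S p).coeff n a b) q = _
  rw [show (fun n => (brCP S p).coeff n a b)
      = fun n => p.coeff n a b - sgn i j • Dfun p b a n from
    funext fun n => brfun_homog S p ha hb n]
  rw [ev_sub_csmul (N := max N1 N2) (fun n hn => h1 n (by omega)) (Dfun_bound p h2') (sgn i j) q]
  congr 1
  rw [show ev (Dfun p b a) q = ev (fun k => p.coeff k b a) (-((X : Polynomial ℂ) + q)) from
    ev_Dop h2' q]
  rfl

lemma br_mul (S : SuperModule L) (p : ConformalProduct L) {i j : ZMod 2} {a b : L}
    (ha : a ∈ S.grade i) (hb : b ∈ S.grade j) (lam : ℂ) :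
    (brCP S p).mul lam a b = p.mul lam a b - sgn i j • p.cmul lam b a := by
  rw [ConformalProduct.mul_eq_opmul, ConformalProduct.mul_eq_opmul,
    ConformalProduct.cmul_eq_opmul]
  exact br_opmul S p ha hb (C lam)

lemma Dfun_mem (S : SuperModule L) (p : ConformalProduct L) {g : ZMod 2} {x y : L}
    (hc : ∀ k, p.coeff k x y ∈ S.grade g) (n : ℕ) : Dfun p x y n ∈ S.grade g := by
  unfold Dfun Dop
  apply finsum_mem_submodule
  intro k
  exact Submodule.smul_mem _ _ (S.Xpow_smul_mem g (k - n) (hc k))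

lemma br_even (S : SuperModule L) (p : ConformalProduct L)
    (hp : ∀ (i j : ZMod 2) (a b : L), a ∈ S.grade i → b ∈ S.grade j →
      ∀ n : ℕ, p.coeff n a b ∈ S.grade (i + j))
    (i j : ZMod 2) (a b : L) (ha : a ∈ S.grade i) (hb : b ∈ S.grade j) (n : ℕ) :
    (brCP S p).coeff n a b ∈ S.grade (i + j) := by
  rw [brCP_coeff, brfun_homog S p ha hb]
  apply sub_mem (hp i j a b ha hb n)
  apply Submodule.smul_mem
  apply Dfun_mem S p (g := i + j)
  intro k
  have := hp j i b a hb ha k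
  rwa [add_comm j i] at this

lemma poly_smul_mem (S : SuperModule L) {g : ZMod 2} (r : Polynomial ℂ) {v : L}
    (hv : v ∈ S.grade g) : r • v ∈ S.grade g := by
  induction r using Polynomial.induction_on' with
  | add p q hp hq => rw [add_smul]; exact add_mem hp hq
  | monomial n c =>
    rw [← Polynomial.C_mul_X_pow_eq_monomial, mul_smul, C_smul]
    exact Submodule.smul_mem _ _ (S.Xpow_smul_mem g n hv)

/-- membership of opmul values (needed for nested products). -/
lemma opmul_mem (S : SuperModule L) (m : ConformalProduct L)
    (hm : ∀ (i j : ZMod 2) (a b : L), a ∈ S.grade i → b ∈ S.grade j →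
      ∀ n : ℕ, m.coeff n a b ∈ S.grade (i + j))
    {i j : ZMod 2} {a b : L} (ha : a ∈ S.grade i) (hb : b ∈ S.grade j) (q : Polynomial ℂ) :
    m.opmul q a b ∈ S.grade (i + j) := by
  apply finsum_mem_submodule
  intro n
  exact poly_smul_mem S _ (hm i j a b ha hb n)

lemma mul_mem (S : SuperModule L) (m : ConformalProduct L)
    (hm : ∀ (i j : ZMod 2) (a b : L), a ∈ S.grade i → b ∈ S.grade j →
      ∀ n : ℕ, m.coeff n a b ∈ S.grade (i + j))
    {i j : ZMod 2} {a b : L} (ha : a ∈ S.grade i) (hb : b ∈ S.grade j) (lam : ℂ) :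
    m.mul lam a b ∈ S.grade (i + j) := by
  rw [ConformalProduct.mul_eq_opmul]
  exact opmul_mem S m hm ha hb (C lam)

end Part10
section Part11
set_option linter.unusedSectionVars false
set_option maxHeartbeats 2000000
set_option synthInstance.maxHeartbeats 1000000

variable {L : Type*} [AddCommGroup L] [Module ℂ L]
  [Module (Polynomial ℂ) L] [IsScalarTower ℂ (Polynomial ℂ) L]
  {S : SuperModule L} {mc p : ConformalProduct L}

/-- Operator form of supercommutativity of the commutative product. -/
lemma comm_op (hca : IsCommAssoc S mc) {i j : ZMod 2} {x y : L}
    (hx : x ∈ S.grade i) (hy : y ∈ S.grade j) (q : Polynomial ℂ) :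
    mc.opmul q x y = sgn i j • mc.opmul (-((X : Polynomial ℂ) + q)) y x := by
  obtain ⟨N1, h1⟩ := mc.coeff_finite x y
  obtain ⟨N2, h2⟩ := mc.coeff_finite y x
  have h1' : ∀ n, max N1 N2 ≤ n → mc.coeff n x y = 0 := fun n hn => h1 n (by omega)
  have h2' : ∀ n, max N1 N2 ≤ n → mc.coeff n y x = 0 := fun n hn => h2 n (by omega)
  have key : ∀ q' : Polynomial ℂ, ev (fun n => mc.coeff n x y) q'
      = ev (fun n => sgn i j • Dfun mc y x n) q' := by
    apply ext_ev (N := max N1 N2) h1'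
      (fun n hn => by simp [Dfun_bound mc h2' n hn])
    intro θ
    have lhs : ev (fun n => mc.coeff n x y) (C θ) = mc.mul θ x y :=
      (ConformalProduct.mul_eq_opmul mc θ x y).symm
    have rhs : ev (fun n => sgn i j • Dfun mc y x n) (C θ) = sgn i j • mc.cmul θ y x := by
      rw [ev_csmul, ev_Dfun mc h2']
      rfl
    rw [lhs, rhs, hca.comm i j x y hx hy θ]
  calc mc.opmul q x y = ev (fun n => sgn i j • Dfun mc y x n) q := key q
    _ = sgn i j • ev (Dfun mc y x) q := ev_csmul _ _ _
    _ = sgn i j • mc.opmul (-((X : Polynomial ℂ) + q)) y x := by rw [ev_Dfun mc h2' q]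

/-- Operator form of `compat₁` of a pre-Lie Poisson conformal superalgebra. -/
lemma C1op (h : IsPreLiePoisson S mc p) (x y z : L) (q₁ q₂ : Polynomial ℂ) :
    NL mc p x y z q₁ q₂ = NR mc p x y z q₁ (q₂ - q₁) := by
  have hslp := h.leftSymmetric.toIsLambdaProduct.sesq_left
  have hsrmc := h.commAssoc.toIsLambdaProduct.sesq_right
  refine rep2_ext (rep2_NL mc p x y z) (rep2_t1 (rep2_NR mc p x y z)) ?_ q₁ q₂
  intro θ ν
  have e1 := shape_NL mc p hslp x y z (C θ) (C ν)
  rw [Polynomial.C_comp] at e1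
  have e2 := shape_NR mc p hsrmc x y z (C θ) (C (ν - θ))
  rw [Polynomial.C_comp] at e2
  rw [← e1, show C ν - C θ = C (ν - θ) from by rw [map_sub], ← e2,
    ← ConformalProduct.mul_eq_opmul, ← ConformalProduct.mul_eq_opmul]
  have hc := h.compat₁ θ (ν - θ) x y z
  rw [show θ + (ν - θ) = ν from by ring] at hc
  rw [← ConformalProduct.mul_eq_opmul, ← ConformalProduct.mul_eq_opmul] at *
  exact hc

/-- Operator form of `compat₂` of a pre-Lie Poisson conformal superalgebra. -/
lemma C2op (h : IsPreLiePoisson S mc p) {i j : ZMod 2} {x y : L}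
    (hx : x ∈ S.grade i) (hy : y ∈ S.grade j) (z : L) (q₁ q₂ : Polynomial ℂ) :
    NL p mc x y z q₁ q₂ - NR p mc x y z q₁ (q₂ - q₁)
      = sgn i j • (NL p mc y x z (q₂ - q₁) q₂ - NR p mc y x z (q₂ - q₁) q₁) := by
  have hslmc := h.commAssoc.toIsLambdaProduct.sesq_left
  have hsrp := h.leftSymmetric.toIsLambdaProduct.sesq_right
  refine rep2_ext (Φ := fun q₁ q₂ => NL p mc x y z q₁ q₂ - NR p mc x y z q₁ (q₂ - q₁))
    (Ψ := fun q₁ q₂ => sgn i j • (NL p mc y x z (q₂ - q₁) q₂ - NR p mc y x z (q₂ - q₁) q₁))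
    (rep2_sub (rep2_NL p mc x y z) (rep2_t1 (rep2_NR p mc x y z)))
    (rep2_smul _ (rep2_sub (rep2_t2 (rep2_NL p mc y x z)) (rep2_t3 (rep2_NR p mc y x z))))
    ?_ q₁ q₂
  intro θ ν
  have e1 := shape_NL p mc hslmc x y z (C θ) (C ν)
  rw [Polynomial.C_comp] at e1
  have e2 := shape_NR p mc hsrp x y z (C θ) (C (ν - θ))
  rw [Polynomial.C_comp] at e2
  have e3 := shape_NL p mc hslmc y x z (C (ν - θ)) (C ν)
  rw [Polynomial.C_comp] at e3
  have e4 := shape_NR p mc hsrp y x z (C (ν - θ)) (C θ)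
  rw [Polynomial.C_comp] at e4
  rw [show C ν - C θ = C (ν - θ) from by rw [map_sub], ← e1, ← e2, ← e3, ← e4,
    ← ConformalProduct.mul_eq_opmul, ← ConformalProduct.mul_eq_opmul,
    ← ConformalProduct.mul_eq_opmul, ← ConformalProduct.mul_eq_opmul,
    ← ConformalProduct.mul_eq_opmul, ← ConformalProduct.mul_eq_opmul,
    ← ConformalProduct.mul_eq_opmul, ← ConformalProduct.mul_eq_opmul]
  have hc := h.compat₂ i j x y hx hy z θ (ν - θ)
  rw [show θ + (ν - θ) = ν from by ring] at hc
  exact hc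

/-- Operator form of left symmetry. -/
lemma LSop (h : IsLeftSymmetric S p) {i j : ZMod 2} {x y : L}
    (hx : x ∈ S.grade i) (hy : y ∈ S.grade j) (z : L) (q₁ q₂ : Polynomial ℂ) :
    NL p p x y z q₁ q₂ - NR p p x y z q₁ (q₂ - q₁)
      = sgn i j • (NL p p y x z (q₂ - q₁) q₂ - NR p p y x z (q₂ - q₁) q₁) := by
  have hslp := h.toIsLambdaProduct.sesq_left
  have hsrp := h.toIsLambdaProduct.sesq_right
  refine rep2_ext (Φ := fun q₁ q₂ => NL p p x y z q₁ q₂ - NR p p x y z q₁ (q₂ - q₁))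
    (Ψ := fun q₁ q₂ => sgn i j • (NL p p y x z (q₂ - q₁) q₂ - NR p p y x z (q₂ - q₁) q₁))
    (rep2_sub (rep2_NL p p x y z) (rep2_t1 (rep2_NR p p x y z)))
    (rep2_smul _ (rep2_sub (rep2_t2 (rep2_NL p p y x z)) (rep2_t3 (rep2_NR p p y x z))))
    ?_ q₁ q₂
  intro θ ν
  have e1 := shape_NL p p hslp x y z (C θ) (C ν)
  rw [Polynomial.C_comp] at e1
  have e2 := shape_NR p p hsrp x y z (C θ) (C (ν - θ))
  rw [Polynomial.C_comp] at e2
  have e3 := shape_NL p p hslp y x z (C (ν - θ)) (C ν)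
  rw [Polynomial.C_comp] at e3
  have e4 := shape_NR p p hsrp y x z (C (ν - θ)) (C θ)
  rw [Polynomial.C_comp] at e4
  rw [show C ν - C θ = C (ν - θ) from by rw [map_sub], ← e1, ← e2, ← e3, ← e4,
    ← ConformalProduct.mul_eq_opmul, ← ConformalProduct.mul_eq_opmul,
    ← ConformalProduct.mul_eq_opmul, ← ConformalProduct.mul_eq_opmul,
    ← ConformalProduct.mul_eq_opmul, ← ConformalProduct.mul_eq_opmul,
    ← ConformalProduct.mul_eq_opmul, ← ConformalProduct.mul_eq_opmul]
  have hc := h.leftSym i j x y hx hy z θ (ν - θ)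
  rw [show θ + (ν - θ) = ν from by ring] at hc
  exact hc

end Part11
section Part12
set_option linter.unusedSectionVars false
set_option maxHeartbeats 2000000
set_option synthInstance.maxHeartbeats 1000000

variable {L : Type*} [AddCommGroup L] [Module ℂ L]
  [Module (Polynomial ℂ) L] [IsScalarTower ℂ (Polynomial ℂ) L]
  {S : SuperModule L} {mc p : ConformalProduct L}

lemma negC_smul (lam : ℂ) (v : L) : (-(C lam) : Polynomial ℂ) • v = (-lam) • v := by
  rw [← map_neg, C_smul]

lemma br_sesq_left_hom (hp : IsLambdaProduct S p) {i j : ZMod 2} {x y : L}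
    (hx : x ∈ S.grade i) (hy : y ∈ S.grade j) (lam : ℂ) :
    (brCP S p).opmul (C lam) ((X : Polynomial ℂ) • x) y
      = (-lam) • (brCP S p).opmul (C lam) x y := by
  have hX : (X : Polynomial ℂ) • x ∈ S.grade i := S.X_smul_mem i x hx
  rw [br_opmul S p hX hy, br_opmul S p hx hy,
    p.opmul_X_left hp.sesq_left, p.opmul_X_right hp.sesq_right,
    show ((X : Polynomial ℂ) + -((X : Polynomial ℂ) + C lam)) = -(C lam) from by ring,
    negC_smul, negC_smul, smul_sub]
  congr 1
  rw [smul_comm]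

lemma br_sesq_right_hom (hp : IsLambdaProduct S p) {i j : ZMod 2} {x y : L}
    (hx : x ∈ S.grade i) (hy : y ∈ S.grade j) (lam : ℂ) :
    (brCP S p).opmul (C lam) x ((X : Polynomial ℂ) • y)
      = (X : Polynomial ℂ) • (brCP S p).opmul (C lam) x y
        + lam • (brCP S p).opmul (C lam) x y := by
  have hY : (X : Polynomial ℂ) • y ∈ S.grade j := S.X_smul_mem j y hy
  rw [br_opmul S p hx hY, br_opmul S p hx hy,
    p.opmul_X_right hp.sesq_right, p.opmul_X_left hp.sesq_left,
    show (-(-((X : Polynomial ℂ) + C lam))) = (X : Polynomial ℂ) + C lam from by ring]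
  have e1 : ((X : Polynomial ℂ) + C lam) • p.opmul (C lam) x y
      = (X : Polynomial ℂ) • p.opmul (C lam) x y + lam • p.opmul (C lam) x y := by
    rw [add_smul, C_smul]
  have e2 : ((X : Polynomial ℂ) + C lam) • p.opmul (-((X : Polynomial ℂ) + C lam)) y x
      = (X : Polynomial ℂ) • p.opmul (-((X : Polynomial ℂ) + C lam)) y x
        + lam • p.opmul (-((X : Polynomial ℂ) + C lam)) y x := by
    rw [add_smul, C_smul]
  rw [e1, e2, smul_add, smul_sub, smul_sub, smul_comm (sgn i j), smul_comm (sgn i j)]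
  module

/-- Full sesquilinearity (left) for the bracket. -/
lemma br_sesq_left (hp : IsLambdaProduct S p) (lam : ℂ) (a b : L) :
    (brCP S p).mul lam ((X : Polynomial ℂ) • a) b = (-lam) • (brCP S p).mul lam a b := by
  set br := brCP S p with hbr
  rw [ConformalProduct.mul_eq_opmul, ConformalProduct.mul_eq_opmul]
  rw [S.proj_total a, S.proj_total b, smul_add,
    br.opmul_add_left, br.opmul_add_right, br.opmul_add_right,
    br.opmul_add_left, br.opmul_add_right, br.opmul_add_right]
  rw [br_sesq_left_hom hp (S.proj_mem 0 a) (S.proj_mem 0 b) lam,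
    br_sesq_left_hom hp (S.proj_mem 0 a) (S.proj_mem 1 b) lam,
    br_sesq_left_hom hp (S.proj_mem 1 a) (S.proj_mem 0 b) lam,
    br_sesq_left_hom hp (S.proj_mem 1 a) (S.proj_mem 1 b) lam]
  module

/-- Full sesquilinearity (right) for the bracket. -/
lemma br_sesq_right (hp : IsLambdaProduct S p) (lam : ℂ) (a b : L) :
    (brCP S p).mul lam a ((X : Polynomial ℂ) • b)
      = (X : Polynomial ℂ) • (brCP S p).mul lam a b + lam • (brCP S p).mul lam a b := by
  set br := brCP S p with hbr
  rw [ConformalProduct.mul_eq_opmul, ConformalProduct.mul_eq_opmul]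
  rw [S.proj_total a, S.proj_total b, smul_add,
    br.opmul_add_left, br.opmul_add_right, br.opmul_add_right,
    br.opmul_add_left, br.opmul_add_right, br.opmul_add_right]
  rw [br_sesq_right_hom hp (S.proj_mem 0 a) (S.proj_mem 0 b) lam,
    br_sesq_right_hom hp (S.proj_mem 0 a) (S.proj_mem 1 b) lam,
    br_sesq_right_hom hp (S.proj_mem 1 a) (S.proj_mem 0 b) lam,
    br_sesq_right_hom hp (S.proj_mem 1 a) (S.proj_mem 1 b) lam]
  module

/-- Skew-symmetry of the bracket. -/
lemma br_skew (i j : ZMod 2) (a b : L) (ha : a ∈ S.grade i) (hb : b ∈ S.grade j) (lam : ℂ) :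
    (brCP S p).mul lam a b = -(sgn i j • (brCP S p).cmul lam b a) := by
  rw [ConformalProduct.mul_eq_opmul, ConformalProduct.cmul_eq_opmul,
    br_opmul S p ha hb, br_opmul S p hb ha,
    show (-((X : Polynomial ℂ) + -((X : Polynomial ℂ) + C lam))) = C lam from by ring,
    smul_sub, smul_smul, sgn_symm j i, sgn_mul_self, one_smul, neg_sub]

end Part12
section Part13
set_option linter.unusedSectionVars false
set_option maxHeartbeats 4000000
set_option synthInstance.maxHeartbeats 1000000

variable {L : Type*} [AddCommGroup L] [Module ℂ L]
  [Module (Polynomial ℂ) L] [IsScalarTower ℂ (Polynomial ℂ) L]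
  {S : SuperModule L} {mc p : ConformalProduct L}

lemma sgn_cases (i j : ZMod 2) : sgn i j = 1 ∨ sgn i j = -1 := by
  rcases zmod2_cases i with h | h <;> rcases zmod2_cases j with h' | h' <;>
    subst h <;> subst h' <;>
    simp [sgn, val_zero', val_one'] <;> norm_num

/-- compat₁ at complex values, in opmul form. -/
lemma fact_compat1 (h : IsPreLiePoisson S mc p) (lam mu : ℂ) (x y z : L) :
    p.opmul (C (lam + mu)) (mc.opmul (C lam) x y) z
      = mc.opmul (C lam) x (p.opmul (C mu) y z) := by
  have hc := h.compat₁ lam mu x y z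
  simp only [ConformalProduct.mul_eq_opmul] at hc
  exact hc

/-- `a ∘_λ (c ∗_{-∂-μ} b) = (a ∘_λ c) ∗_{-∂-μ} b` (operator compat₁ instance). -/
lemma fact_f2 (h : IsPreLiePoisson S mc p) (lam mu : ℂ) (a c b : L) :
    mc.opmul (C lam) a (p.opmul (-((X : Polynomial ℂ) + C mu)) c b)
      = p.opmul (-((X : Polynomial ℂ) + C mu)) (mc.opmul (C lam) a c) b := by
  have hslp := h.leftSymmetric.toIsLambdaProduct.sesq_left
  have hsrmc := h.commAssoc.toIsLambdaProduct.sesq_right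
  have sh1 := shape_NL mc p hslp a c b (C lam) (-((X : Polynomial ℂ) + C mu))
  rw [Polynomial.C_comp] at sh1
  have sh2 := shape_NR mc p hsrmc a c b (C lam) (-((X : Polynomial ℂ) + C mu))
  rw [show ((-((X : Polynomial ℂ) + C mu)).comp ((X : Polynomial ℂ) + C lam))
      = -((X : Polynomial ℂ) + C mu) - C lam from by
    simp only [Polynomial.neg_comp, Polynomial.add_comp, Polynomial.X_comp, Polynomial.C_comp]
    ring] at sh2
  rw [sh1, sh2, C1op h a c b (C lam) (-((X : Polynomial ℂ) + C mu))]

/-- Operator compat₂ instance for the `c ∗_{-∂-λ-μ} (a ∘_λ b)` term. -/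
lemma fact_f3 (h : IsPreLiePoisson S mc p) {i k : ZMod 2} {a c : L}
    (ha : a ∈ S.grade i) (hc : c ∈ S.grade k) (b : L) (lam mu : ℂ) :
    p.opmul (-((X : Polynomial ℂ) + C (lam + mu))) c (mc.opmul (C lam) a b)
      = mc.opmul (-((X : Polynomial ℂ) + C mu)) (p.opmul (-((X : Polynomial ℂ) + C lam)) c a) b
        - sgn i k • mc.opmul (-((X : Polynomial ℂ) + C mu)) (p.opmul (C lam) a c) b
        + sgn i k • p.opmul (C lam) a (mc.opmul (-((X : Polynomial ℂ) + C mu)) c b) := by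
  have hslmc := h.commAssoc.toIsLambdaProduct.sesq_left
  have hsrp := h.leftSymmetric.toIsLambdaProduct.sesq_right
  have hinst := C2op h hc ha b (-((X : Polynomial ℂ) + C (lam + mu)))
    (-((X : Polynomial ℂ) + C mu))
  rw [show (-((X : Polynomial ℂ) + C mu) - -((X : Polynomial ℂ) + C (lam + mu))) = C lam from by
    rw [map_add]; ring] at hinst
  -- translate the four terms
  have t1 := shape_NL p mc hslmc c a b (-((X : Polynomial ℂ) + C lam))
    (-((X : Polynomial ℂ) + C mu))
  rw [show ((-((X : Polynomial ℂ) + C lam)).comp (-(-((X : Polynomial ℂ) + C mu))))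
      = -((X : Polynomial ℂ) + C (lam + mu)) from by
    simp only [Polynomial.neg_comp, Polynomial.add_comp, Polynomial.X_comp, Polynomial.C_comp]
    rw [map_add]; ring] at t1
  have t2 := shape_NR p mc hsrp c a b (-((X : Polynomial ℂ) + C (lam + mu))) (C lam)
  rw [Polynomial.C_comp] at t2
  have t3 := shape_NL p mc hslmc a c b (C lam) (-((X : Polynomial ℂ) + C mu))
  rw [Polynomial.C_comp] at t3
  have t4 := shape_NR p mc hsrp a c b (C lam) (-((X : Polynomial ℂ) + C mu))
  rw [show ((-((X : Polynomial ℂ) + C mu)).comp ((X : Polynomial ℂ) + C lam))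
      = -((X : Polynomial ℂ) + C (lam + mu)) from by
    simp only [Polynomial.neg_comp, Polynomial.add_comp, Polynomial.X_comp, Polynomial.C_comp]
    rw [map_add]; ring] at t4
  rw [← t1, ← t2, ← t3, ← t4] at hinst
  rw [sgn_symm k i, smul_sub] at hinst
  -- hinst : T1 - T2 = sgn i k • T3 - sgn i k • T4 ; goal : T2 = T1 - sgn i k • T3 + sgn i k • T4
  linear_combination (norm := module) -hinst

/-- comm_op convenience: `x ∘_{[-(X+q)]} y = sgn • x' ...` in the useful direction. -/
lemma comm_op' (hca : IsCommAssoc S mc) {i j : ZMod 2} {x y : L}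
    (hx : x ∈ S.grade i) (hy : y ∈ S.grade j) (q : Polynomial ℂ) :
    mc.opmul (-((X : Polynomial ℂ) + q)) x y = sgn i j • mc.opmul q y x := by
  have := comm_op hca hx hy (-((X : Polynomial ℂ) + q))
  rw [show (-((X : Polynomial ℂ) + -((X : Polynomial ℂ) + q))) = q from by ring] at this
  exact this

end Part13
section Part14
set_option linter.unusedSectionVars false
set_option maxHeartbeats 4000000
set_option synthInstance.maxHeartbeats 1000000

variable {L : Type*} [AddCommGroup L] [Module ℂ L]
  [Module (Polynomial ℂ) L] [IsScalarTower ℂ (Polynomial ℂ) L]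
  {S : SuperModule L} {mc p : ConformalProduct L}

lemma fact_f4 (h : IsPreLiePoisson S mc p) {j k : ZMod 2} {b c : L}
    (hb : b ∈ S.grade j) (hc : c ∈ S.grade k) (a : L) (lam mu : ℂ) :
    p.opmul (C lam) a (mc.opmul (-((X : Polynomial ℂ) + C mu)) c b)
      = sgn j k • p.opmul (C lam) a (mc.opmul (C mu) b c) := by
  rw [comm_op' h.commAssoc hc hb (C mu), p.opmul_smul_right, sgn_symm k j]

lemma fact_f6 (h : IsPreLiePoisson S mc p) {i j k : ZMod 2} {a b c : L}
    (ha : a ∈ S.grade i) (hb : b ∈ S.grade j) (hc : c ∈ S.grade k) (lam mu : ℂ) :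
    mc.opmul (-((X : Polynomial ℂ) + C mu)) (p.opmul (-((X : Polynomial ℂ) + C lam)) c a) b
      = (sgn i j * sgn j k) • p.opmul (-((X : Polynomial ℂ) + C lam))
          (mc.opmul (C mu) b c) a := by
  have hslp := h.leftSymmetric.toIsLambdaProduct.sesq_left
  have hsrmc := h.commAssoc.toIsLambdaProduct.sesq_right
  have hpca : p.opmul (-((X : Polynomial ℂ) + C lam)) c a ∈ S.grade (k + i) :=
    opmul_mem S p h.leftSymmetric.even hc ha _
  rw [comm_op' h.commAssoc hpca hb (C mu)]
  have e1 := shape_NL mc p hslp b c a (C mu) (-((X : Polynomial ℂ) + C lam))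
  rw [Polynomial.C_comp] at e1
  have e2 := shape_NR mc p hsrmc b c a (C mu) (-((X : Polynomial ℂ) + C lam))
  rw [show ((-((X : Polynomial ℂ) + C lam)).comp ((X : Polynomial ℂ) + C mu))
      = -((X : Polynomial ℂ) + C lam) - C mu from by
    simp only [Polynomial.neg_comp, Polynomial.add_comp, Polynomial.X_comp, Polynomial.C_comp]
    ring] at e2
  have key : mc.opmul (C mu) b (p.opmul (-((X : Polynomial ℂ) + C lam)) c a)
      = p.opmul (-((X : Polynomial ℂ) + C lam)) (mc.opmul (C mu) b c) a := by
    rw [e1, e2, C1op h b c a (C mu) (-((X : Polynomial ℂ) + C lam))]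
  rw [key]
  rcases sgn_cases i j with h1 | h1 <;> rcases sgn_cases i k with h2 | h2 <;>
    rcases sgn_cases j k with h3 | h3 <;>
    simp only [sgn_add_left, sgn_add_right, sgn_symm j i, sgn_symm k i, sgn_symm k j,
      h1, h2, h3] <;>
    module

lemma fact_f5 (h : IsPreLiePoisson S mc p) {i j k : ZMod 2} {a b c : L}
    (ha : a ∈ S.grade i) (hb : b ∈ S.grade j) (hc : c ∈ S.grade k) (lam mu : ℂ) :
    mc.opmul (-((X : Polynomial ℂ) + C mu)) (p.opmul (C lam) a c) b
      = (sgn i j * sgn j k) • p.opmul (C (lam + mu)) (mc.opmul (C mu) b a) c := by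
  have hpac : p.opmul (C lam) a c ∈ S.grade (i + k) :=
    opmul_mem S p h.leftSymmetric.even ha hc _
  rw [comm_op' h.commAssoc hpac hb (C mu)]
  have e := fact_compat1 h mu lam b a c
  rw [show C (mu + lam) = C (lam + mu) from by rw [add_comm]] at e
  rw [← e]
  rcases sgn_cases i j with h1 | h1 <;> rcases sgn_cases i k with h2 | h2 <;>
    rcases sgn_cases j k with h3 | h3 <;>
    simp only [sgn_add_left, sgn_add_right, sgn_symm j i, sgn_symm k i, sgn_symm k j,
      h1, h2, h3] <;>
    module

lemma fact_f10 (h : IsPreLiePoisson S mc p) {i j : ZMod 2} {a b : L}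
    (ha : a ∈ S.grade i) (hb : b ∈ S.grade j) (c : L) (lam mu : ℂ) :
    p.opmul (C (lam + mu)) (mc.opmul (C mu) b a) c
      = sgn i j • mc.opmul (C lam) a (p.opmul (C mu) b c) := by
  have hslp := h.leftSymmetric.toIsLambdaProduct.sesq_left
  rw [comm_op h.commAssoc hb ha (C mu), p.opmul_smul_left]
  have e1 := shape_NL mc p hslp a b c (-((X : Polynomial ℂ) + C mu)) (C (lam + mu))
  rw [show ((-((X : Polynomial ℂ) + C mu)).comp (-(C (lam + mu))))
      = C lam from by
    simp only [Polynomial.neg_comp, Polynomial.add_comp, Polynomial.X_comp, Polynomial.C_comp]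
    rw [map_add]; ring] at e1
  have e2 := shape_NL mc p hslp a b c (C lam) (C (lam + mu))
  rw [Polynomial.C_comp] at e2
  rw [e1, ← e2, fact_compat1 h lam mu a b c, sgn_symm j i]

lemma fact_f8 (h : IsPreLiePoisson S mc p) {i j k : ZMod 2} {a b c : L}
    (ha : a ∈ S.grade i) (hb : b ∈ S.grade j) (hc : c ∈ S.grade k) (lam mu : ℂ) :
    mc.opmul (C (lam + mu)) (p.opmul (C lam) a b) c
      = sgn j k • p.opmul (-((X : Polynomial ℂ) + C mu)) (mc.opmul (C lam) a c) b := by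
  have hslp := h.leftSymmetric.toIsLambdaProduct.sesq_left
  have hsrmc := h.commAssoc.toIsLambdaProduct.sesq_right
  have hpab : p.opmul (C lam) a b ∈ S.grade (i + j) :=
    opmul_mem S p h.leftSymmetric.even ha hb _
  rw [comm_op h.commAssoc hpab hc (C (lam + mu))]
  have e1 := shape_NR mc p hsrmc c a b (-((X : Polynomial ℂ) + C (lam + mu))) (C lam)
  rw [Polynomial.C_comp] at e1
  have e2 := shape_NL mc p hslp c a b (-((X : Polynomial ℂ) + C lam))
    (-((X : Polynomial ℂ) + C mu))
  rw [show ((-((X : Polynomial ℂ) + C lam)).comp (-(-((X : Polynomial ℂ) + C mu))))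
      = -((X : Polynomial ℂ) + C (lam + mu)) from by
    simp only [Polynomial.neg_comp, Polynomial.add_comp, Polynomial.X_comp, Polynomial.C_comp]
    rw [map_add]; ring] at e2
  have key : mc.opmul (-((X : Polynomial ℂ) + C (lam + mu))) c (p.opmul (C lam) a b)
      = p.opmul (-((X : Polynomial ℂ) + C mu))
          (mc.opmul (-((X : Polynomial ℂ) + C lam)) c a) b := by
    have hC1 := C1op h c a b (-((X : Polynomial ℂ) + C (lam + mu)))
      (-((X : Polynomial ℂ) + C mu))
    rw [show (-((X : Polynomial ℂ) + C mu) - -((X : Polynomial ℂ) + C (lam + mu))) = C lam from by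
      rw [map_add]; ring] at hC1
    rw [e1, e2, hC1]
  rw [key, comm_op' h.commAssoc hc ha (C lam), p.opmul_smul_left]
  rcases sgn_cases i j with h1 | h1 <;> rcases sgn_cases i k with h2 | h2 <;>
    rcases sgn_cases j k with h3 | h3 <;>
    simp only [sgn_add_left, sgn_add_right, sgn_symm j i, sgn_symm k i, sgn_symm k j,
      h1, h2, h3] <;>
    module

lemma fact_f9 (h : IsPreLiePoisson S mc p) {i j k : ZMod 2} {a b c : L}
    (ha : a ∈ S.grade i) (hb : b ∈ S.grade j) (hc : c ∈ S.grade k) (lam mu : ℂ) :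
    mc.opmul (C (lam + mu)) (p.opmul (C mu) b a) c
      = sgn i k • p.opmul (-((X : Polynomial ℂ) + C lam)) (mc.opmul (C mu) b c) a := by
  have hslp := h.leftSymmetric.toIsLambdaProduct.sesq_left
  have hsrmc := h.commAssoc.toIsLambdaProduct.sesq_right
  have hpba : p.opmul (C mu) b a ∈ S.grade (j + i) :=
    opmul_mem S p h.leftSymmetric.even hb ha _
  rw [comm_op h.commAssoc hpba hc (C (lam + mu))]
  have e1 := shape_NR mc p hsrmc c b a (-((X : Polynomial ℂ) + C (lam + mu))) (C mu)
  rw [Polynomial.C_comp] at e1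
  have e2 := shape_NL mc p hslp c b a (-((X : Polynomial ℂ) + C mu))
    (-((X : Polynomial ℂ) + C lam))
  rw [show ((-((X : Polynomial ℂ) + C mu)).comp (-(-((X : Polynomial ℂ) + C lam))))
      = -((X : Polynomial ℂ) + C (lam + mu)) from by
    simp only [Polynomial.neg_comp, Polynomial.add_comp, Polynomial.X_comp, Polynomial.C_comp]
    rw [map_add]; ring] at e2
  have key : mc.opmul (-((X : Polynomial ℂ) + C (lam + mu))) c (p.opmul (C mu) b a)
      = p.opmul (-((X : Polynomial ℂ) + C lam))
          (mc.opmul (-((X : Polynomial ℂ) + C mu)) c b) a := by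
    have hC1 := C1op h c b a (-((X : Polynomial ℂ) + C (lam + mu)))
      (-((X : Polynomial ℂ) + C lam))
    rw [show (-((X : Polynomial ℂ) + C lam) - -((X : Polynomial ℂ) + C (lam + mu))) = C mu from by
      rw [map_add]; ring] at hC1
    rw [e1, e2, hC1]
  rw [key, comm_op' h.commAssoc hc hb (C mu), p.opmul_smul_left]
  rcases sgn_cases i j with h1 | h1 <;> rcases sgn_cases i k with h2 | h2 <;>
    rcases sgn_cases j k with h3 | h3 <;>
    simp only [sgn_add_left, sgn_add_right, sgn_symm j i, sgn_symm k i, sgn_symm k j,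
      h1, h2, h3] <;>
    module

lemma fact_f7 (h : IsPreLiePoisson S mc p) {i j : ZMod 2} {a b : L}
    (ha : a ∈ S.grade i) (hb : b ∈ S.grade j) (c : L) (lam mu : ℂ) :
    p.opmul (C lam) a (mc.opmul (C mu) b c)
      = mc.opmul (C (lam + mu)) (p.opmul (C lam) a b) c
        - sgn i j • mc.opmul (C (lam + mu)) (p.opmul (C mu) b a) c
        + sgn i j • p.opmul (C mu) b (mc.opmul (C lam) a c) := by
  have hc2 := h.compat₂ i j a b ha hb c lam mu
  simp only [ConformalProduct.mul_eq_opmul] at hc2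
  rw [smul_sub] at hc2
  linear_combination (norm := module) -hc2

/-- Transposed conformal Leibniz rule on homogeneous elements. -/
lemma leibniz_hom (h : IsPreLiePoisson S mc p) {i j k : ZMod 2} {a b c : L}
    (ha : a ∈ S.grade i) (hb : b ∈ S.grade j) (hc : c ∈ S.grade k) (lam mu : ℂ) :
    (2 : ℂ) • mc.mul lam a ((brCP S p).mul mu b c)
      = (brCP S p).mul (lam + mu) (mc.mul lam a b) c
        + sgn i j • (brCP S p).mul mu b (mc.mul lam a c) := by
  have hmcab : mc.opmul (C lam) a b ∈ S.grade (i + j) :=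
    opmul_mem S mc h.commAssoc.even ha hb _
  have hmcac : mc.opmul (C lam) a c ∈ S.grade (i + k) :=
    opmul_mem S mc h.commAssoc.even ha hc _
  simp only [ConformalProduct.mul_eq_opmul]
  rw [br_opmul S p hb hc, br_opmul S p hmcab hc, br_opmul S p hb hmcac,
    mc.opmul_sub_right, mc.opmul_smul_right]
  rw [fact_f2 h lam mu a c b, fact_compat1 h lam mu a b c, fact_f3 h ha hc b lam mu,
    fact_f6 h ha hb hc lam mu, fact_f5 h ha hb hc lam mu, fact_f4 h hb hc a lam mu,
    fact_f10 h ha hb c lam mu, fact_f7 h ha hb c lam mu, fact_f8 h ha hb hc lam mu,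
    fact_f9 h ha hb hc lam mu]
  rcases sgn_cases i j with h1 | h1 <;> rcases sgn_cases i k with h2 | h2 <;>
    rcases sgn_cases j k with h3 | h3 <;>
    simp only [sgn_add_left, sgn_add_right, sgn_symm j i, sgn_symm k i, sgn_symm k j,
      h1, h2, h3] <;>
    module

end Part14
section Part15
set_option linter.unusedSectionVars false
set_option maxHeartbeats 4000000
set_option synthInstance.maxHeartbeats 1000000

variable {L : Type*} [AddCommGroup L] [Module ℂ L]
  [Module (Polynomial ℂ) L] [IsScalarTower ℂ (Polynomial ℂ) L]
  {S : SuperModule L} {mc p : ConformalProduct L}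

/-- Left symmetry at complex values, oriented. -/
lemma fact_jg1 (hls : IsLeftSymmetric S p) {i j : ZMod 2} {a b : L}
    (ha : a ∈ S.grade i) (hb : b ∈ S.grade j) (c : L) (lam mu : ℂ) :
    p.opmul (C (lam + mu)) (p.opmul (C lam) a b) c
      = p.opmul (C lam) a (p.opmul (C mu) b c)
        + sgn i j • p.opmul (C (lam + mu)) (p.opmul (C mu) b a) c
        - sgn i j • p.opmul (C mu) b (p.opmul (C lam) a c) := by
  have hi := hls.leftSym i j a b ha hb c lam mu
  simp only [ConformalProduct.mul_eq_opmul] at hi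
  rw [smul_sub] at hi
  linear_combination (norm := module) hi

lemma fact_jg1b (hls : IsLeftSymmetric S p) (a b c : L) (lam mu : ℂ) :
    p.opmul (C (lam + mu)) (p.opmul (-((X : Polynomial ℂ) + C lam)) b a) c
      = p.opmul (C (lam + mu)) (p.opmul (C mu) b a) c := by
  have hslp := hls.toIsLambdaProduct.sesq_left
  have s1 := shape_NL p p hslp b a c (-((X : Polynomial ℂ) + C lam)) (C (lam + mu))
  rw [show ((-((X : Polynomial ℂ) + C lam)).comp (-(C (lam + mu)))) = C mu from by
    simp only [Polynomial.neg_comp, Polynomial.add_comp, Polynomial.X_comp, Polynomial.C_comp]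
    rw [map_add]; ring] at s1
  have s2 := shape_NL p p hslp b a c (C mu) (C (lam + mu))
  rw [Polynomial.C_comp] at s2
  rw [s1, ← s2]

/-- Operator left symmetry instance eliminating `(a ∗_λ c) ∗_{-∂-μ} b`. -/
lemma fact_jg2 (hls : IsLeftSymmetric S p) {i k : ZMod 2} {a c : L}
    (ha : a ∈ S.grade i) (hc : c ∈ S.grade k) (b : L) (lam mu : ℂ) :
    p.opmul (-((X : Polynomial ℂ) + C mu)) (p.opmul (C lam) a c) b
      = p.opmul (C lam) a (p.opmul (-((X : Polynomial ℂ) + C mu)) c b)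
        + sgn i k • p.opmul (-((X : Polynomial ℂ) + C mu))
            (p.opmul (-((X : Polynomial ℂ) + C lam)) c a) b
        - sgn i k • p.opmul (-((X : Polynomial ℂ) + C (lam + mu))) c
            (p.opmul (C lam) a b) := by
  have hslp := hls.toIsLambdaProduct.sesq_left
  have hsrp := hls.toIsLambdaProduct.sesq_right
  have hinst := LSop hls ha hc b (C lam) (-((X : Polynomial ℂ) + C mu))
  rw [show (-((X : Polynomial ℂ) + C mu) - C lam) = -((X : Polynomial ℂ) + C (lam + mu)) from by
    rw [map_add]; ring] at hinst
  have u1 := shape_NL p p hslp a c b (C lam) (-((X : Polynomial ℂ) + C mu))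
  rw [Polynomial.C_comp] at u1
  have u2 := shape_NR p p hsrp a c b (C lam) (-((X : Polynomial ℂ) + C mu))
  rw [show ((-((X : Polynomial ℂ) + C mu)).comp ((X : Polynomial ℂ) + C lam))
      = -((X : Polynomial ℂ) + C (lam + mu)) from by
    simp only [Polynomial.neg_comp, Polynomial.add_comp, Polynomial.X_comp, Polynomial.C_comp]
    rw [map_add]; ring] at u2
  have u3 := shape_NL p p hslp c a b (-((X : Polynomial ℂ) + C lam))
    (-((X : Polynomial ℂ) + C mu))
  rw [show ((-((X : Polynomial ℂ) + C lam)).comp (-(-((X : Polynomial ℂ) + C mu))))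
      = -((X : Polynomial ℂ) + C (lam + mu)) from by
    simp only [Polynomial.neg_comp, Polynomial.add_comp, Polynomial.X_comp, Polynomial.C_comp]
    rw [map_add]; ring] at u3
  have u4 := shape_NR p p hsrp c a b (-((X : Polynomial ℂ) + C (lam + mu))) (C lam)
  rw [Polynomial.C_comp] at u4
  rw [← u1, ← u2, ← u3, ← u4, smul_sub] at hinst
  linear_combination (norm := module) hinst

/-- Operator left symmetry instance eliminating `(b ∗_μ c) ∗_{-∂-λ} a`. -/
lemma fact_jg3 (hls : IsLeftSymmetric S p) {j k : ZMod 2} {b c : L}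
    (hb : b ∈ S.grade j) (hc : c ∈ S.grade k) (a : L) (lam mu : ℂ) :
    p.opmul (-((X : Polynomial ℂ) + C lam)) (p.opmul (C mu) b c) a
      = p.opmul (C mu) b (p.opmul (-((X : Polynomial ℂ) + C lam)) c a)
        + sgn j k • p.opmul (-((X : Polynomial ℂ) + C lam))
            (p.opmul (-((X : Polynomial ℂ) + C mu)) c b) a
        - sgn j k • p.opmul (-((X : Polynomial ℂ) + C (lam + mu))) c
            (p.opmul (-((X : Polynomial ℂ) + C lam)) b a) := by
  have hslp := hls.toIsLambdaProduct.sesq_left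
  have hsrp := hls.toIsLambdaProduct.sesq_right
  have hinst := LSop hls hb hc a (C mu) (-((X : Polynomial ℂ) + C lam))
  rw [show (-((X : Polynomial ℂ) + C lam) - C mu) = -((X : Polynomial ℂ) + C (lam + mu)) from by
    rw [map_add]; ring] at hinst
  have v1 := shape_NL p p hslp b c a (C mu) (-((X : Polynomial ℂ) + C lam))
  rw [Polynomial.C_comp] at v1
  have v2 := shape_NR p p hsrp b c a (C mu) (-((X : Polynomial ℂ) + C lam))
  rw [show ((-((X : Polynomial ℂ) + C lam)).comp ((X : Polynomial ℂ) + C mu))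
      = -((X : Polynomial ℂ) + C (lam + mu)) from by
    simp only [Polynomial.neg_comp, Polynomial.add_comp, Polynomial.X_comp, Polynomial.C_comp]
    rw [map_add]; ring] at v2
  have v3 := shape_NL p p hslp c b a (-((X : Polynomial ℂ) + C mu))
    (-((X : Polynomial ℂ) + C lam))
  rw [show ((-((X : Polynomial ℂ) + C mu)).comp (-(-((X : Polynomial ℂ) + C lam))))
      = -((X : Polynomial ℂ) + C (lam + mu)) from by
    simp only [Polynomial.neg_comp, Polynomial.add_comp, Polynomial.X_comp, Polynomial.C_comp]
    rw [map_add]; ring] at v3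
  have v4 := shape_NR p p hsrp c b a (-((X : Polynomial ℂ) + C (lam + mu)))
    (-((X : Polynomial ℂ) + C lam))
  rw [show ((-((X : Polynomial ℂ) + C lam)).comp
      ((X : Polynomial ℂ) + -((X : Polynomial ℂ) + C (lam + mu)))) = C mu from by
    simp only [Polynomial.neg_comp, Polynomial.add_comp, Polynomial.X_comp, Polynomial.C_comp]
    rw [map_add]; ring] at v4
  rw [← v1, ← v2, ← v3, ← v4, smul_sub] at hinst
  linear_combination (norm := module) hinst

/-- Jacobi identity for the bracket on homogeneous elements. -/
lemma jacobi_hom (hls : IsLeftSymmetric S p) {i j k : ZMod 2} {a b c : L}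
    (ha : a ∈ S.grade i) (hb : b ∈ S.grade j) (hc : c ∈ S.grade k) (lam mu : ℂ) :
    (brCP S p).mul lam a ((brCP S p).mul mu b c)
      = (brCP S p).mul (lam + mu) ((brCP S p).mul lam a b) c
        + sgn i j • (brCP S p).mul mu b ((brCP S p).mul lam a c) := by
  have hbrbc : (brCP S p).opmul (C mu) b c ∈ S.grade (j + k) :=
    opmul_mem S (brCP S p) (br_even S p hls.even) hb hc _
  have hbrab : (brCP S p).opmul (C lam) a b ∈ S.grade (i + j) :=
    opmul_mem S (brCP S p) (br_even S p hls.even) ha hb _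
  have hbrac : (brCP S p).opmul (C lam) a c ∈ S.grade (i + k) :=
    opmul_mem S (brCP S p) (br_even S p hls.even) ha hc _
  simp only [ConformalProduct.mul_eq_opmul]
  rw [br_opmul S p ha hbrbc, br_opmul S p hbrab hc, br_opmul S p hb hbrac,
    br_opmul S p hb hc, br_opmul S p ha hb, br_opmul S p ha hc]
  simp only [ConformalProduct.opmul_sub_left, ConformalProduct.opmul_sub_right,
    ConformalProduct.opmul_smul_left, ConformalProduct.opmul_smul_right]
  rw [fact_jg1 hls ha hb c lam mu, fact_jg1b hls a b c lam mu,
    fact_jg2 hls ha hc b lam mu, fact_jg3 hls hb hc a lam mu]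
  rcases sgn_cases i j with h1 | h1 <;> rcases sgn_cases i k with h2 | h2 <;>
    rcases sgn_cases j k with h3 | h3 <;>
    simp only [sgn_add_left, sgn_add_right, sgn_symm j i, sgn_symm k i, sgn_symm k j,
      h1, h2, h3] <;>
    module

end Part15
section Part16
set_option linter.unusedSectionVars false
set_option maxHeartbeats 4000000
set_option synthInstance.maxHeartbeats 1000000

variable {L : Type*} [AddCommGroup L] [Module ℂ L]
  [Module (Polynomial ℂ) L] [IsScalarTower ℂ (Polynomial ℂ) L]
  {S : SuperModule L} {mc p : ConformalProduct L}

lemma br_jacobi (hls : IsLeftSymmetric S p) :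
    ∀ (i j : ZMod 2) (a b : L), a ∈ S.grade i → b ∈ S.grade j →
      ∀ (c : L) (lam mu : ℂ),
        (brCP S p).mul lam a ((brCP S p).mul mu b c)
          = (brCP S p).mul (lam + mu) ((brCP S p).mul lam a b) c
            + sgn i j • (brCP S p).mul mu b ((brCP S p).mul lam a c) := by
  intro i j a b ha hb c lam mu
  have h0 := jacobi_hom hls ha hb (S.proj_mem 0 c) lam mu
  have h1 := jacobi_hom hls ha hb (S.proj_mem 1 c) lam mu
  simp only [ConformalProduct.mul_eq_opmul] at h0 h1 ⊢
  rw [S.proj_total c]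
  simp only [ConformalProduct.opmul_add_right, smul_add]
  rw [h0, h1]
  module

lemma br_leibniz (h : IsPreLiePoisson S mc p) :
    ∀ (i j : ZMod 2) (a b : L), a ∈ S.grade i → b ∈ S.grade j →
      ∀ (c : L) (lam mu : ℂ),
        (2 : ℂ) • mc.mul lam a ((brCP S p).mul mu b c)
          = (brCP S p).mul (lam + mu) (mc.mul lam a b) c
            + sgn i j • (brCP S p).mul mu b (mc.mul lam a c) := by
  intro i j a b ha hb c lam mu
  have h0 := leibniz_hom h ha hb (S.proj_mem 0 c) lam mu
  have h1 := leibniz_hom h ha hb (S.proj_mem 1 c) lam mu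
  simp only [ConformalProduct.mul_eq_opmul] at h0 h1 ⊢
  rw [S.proj_total c]
  simp only [ConformalProduct.opmul_add_right, smul_add]
  rw [h0, h1]
  module

lemma br_skew' (hls : IsLeftSymmetric S p) :
    ∀ (i j : ZMod 2) (a b : L), a ∈ S.grade i → b ∈ S.grade j →
      ∀ lam : ℂ, (brCP S p).mul lam a b = -(sgn i j • (brCP S p).cmul lam b a) :=
  fun i j a b ha hb lam => br_skew i j a b ha hb lam

end Part16
/-- the commutator bracket
`[a_λ b] = a ∗_λ b - (-1)^{|a||b|} (b ∗_{-∂-λ} a)` of a pre-Lie Poisson conformal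
superalgebra makes it a transposed Poisson conformal superalgebra. -/
theorem statement_15 (S : SuperModule L) (mc p : ConformalProduct L)
    (hPLP : IsPreLiePoisson S mc p) :
    ∃ br : ConformalProduct L,
      (∀ (i j : ZMod 2) (a b : L), a ∈ S.grade i → b ∈ S.grade j →
        ∀ lam : ℂ, br.mul lam a b = p.mul lam a b - sgn i j • p.cmul lam b a) ∧
      IsTPCSA S mc br := by
  refine ⟨brCP S p, ?_, ?_⟩
  · intro i j a b ha hb lam
    exact br_mul S p ha hb lam
  · refine ⟨hPLP.commAssoc, ?_, br_leibniz hPLP⟩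
    exact {
      even := br_even S p hPLP.leftSymmetric.even
      sesq_left := br_sesq_left hPLP.leftSymmetric.toIsLambdaProduct
      sesq_right := br_sesq_right hPLP.leftSymmetric.toIsLambdaProduct
      skew := br_skew' hPLP.leftSymmetric
      jacobi := br_jacobi hPLP.leftSymmetric }

end TPCSAFormal
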